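/- arXiv:1607.04031 — 5 statements merged into one kernel-verified Lean document; each statement's English description precedes it below -/
import Mathlib

section
/- The cardinalities of T^-_j and T^+_j satisfy the crossing recurrence: #T^-_1 = n_1 − 1, #T^+_1 = 1, and for 2 ≤ j ≤ α, #T^-_j = (2^{n_j−1} − 1)·#T^-_{j−1} + 2^{n_j−2}·#T^+_{j−1} and #T^+_j = 2^{n_j−1}·#T^-_{j−1} + 2^{n_j−2}·#T^+_{j−1}. -/
/-- The set `T^+_j` (for `pos = true`) resp. `T^-_j` (for `pos = false`) of tuples
`(S_1,…,S_j)` (indexed here from `0`) of nonempty subsets `S_k ⊆ {0,…,n_k−1}`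
satisfying P1, P3 (for `k < j`), with `n_j − 1 ∈ S_j` (resp. `n_j − 1 ∉ S_j`),
padded with `∅` beyond position `j`. -/
def Tpm (n : ℕ → ℕ) (j : ℕ) (pos : Bool) : Set (ℕ → Finset ℕ) :=
  {S | (∀ k, j ≤ k → S k = ∅) ∧
       (∀ k, k < j → S k ⊆ Finset.range (n k)) ∧
       (∀ k, k < j → (S k).Nonempty) ∧
       (0 < j → (S 0).card = 1) ∧
       (∀ k, k + 1 < j → n k - 1 ∈ S k → 0 ∈ S (k + 1)) ∧
       (0 < j → (n (j - 1) - 1 ∈ S (j - 1) ↔ pos = true))}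

lemma insert_injOn_aux (a : ℕ) (s : Finset (Finset ℕ)) (h : ∀ B ∈ s, a ∉ B) :
    Set.InjOn (insert a) (s : Set (Finset ℕ)) := by
  intro B hB B' hB' hh
  rw [← Finset.erase_insert (h B hB), ← Finset.erase_insert (h B' hB'), hh]

lemma card_filter_one (m : ℕ) (hm : 2 ≤ m) (p : Finset ℕ → Prop) [DecidablePred p]
    (hp : ∀ A, A ⊆ Finset.range m → (p A ↔ m - 1 ∈ A)) :
    ((Finset.range m).powerset.filter p).card = 2 ^ (m - 1) := by
  have he : (Finset.range m).powerset.filter p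
      = (Finset.range (m-1)).powerset.image (insert (m-1)) := by
    ext A
    simp only [Finset.mem_filter, Finset.mem_powerset, Finset.mem_image]
    constructor
    · rintro ⟨hsub, hA⟩
      refine ⟨A.erase (m-1), fun x hx => ?_, Finset.insert_erase ((hp A hsub).mp hA)⟩
      simp only [Finset.mem_erase] at hx
      have := hsub hx.2
      simp only [Finset.mem_range] at this ⊢
      omega
    · rintro ⟨B, hB, rfl⟩
      have hsub : insert (m-1) B ⊆ Finset.range m := by
        intro x hx
        rcases Finset.mem_insert.1 hx with rfl | hx
        · simp; omega
        · have := hB hx; simp only [Finset.mem_range] at this ⊢; omega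
      exact ⟨hsub, (hp _ hsub).mpr (Finset.mem_insert_self _ _)⟩
  rw [he, Finset.card_image_of_injOn, Finset.card_powerset, Finset.card_range]
  refine insert_injOn_aux _ _ (fun B hB hx => ?_)
  simp only [Finset.mem_powerset] at hB
  have h2 := hB hx
  simp only [Finset.mem_range] at h2
  omega

def Ffin (m : ℕ) (b pos : Bool) : Finset (Finset ℕ) :=
  (Finset.range m).powerset.filter
    (fun A => (if b then 0 ∈ A else A.Nonempty) ∧ (m - 1 ∈ A ↔ pos = true))

lemma mem_Ffin {m : ℕ} {b pos : Bool} {A : Finset ℕ} :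
    A ∈ Ffin m b pos ↔ A ⊆ Finset.range m ∧ (if b then 0 ∈ A else A.Nonempty) ∧
      (m - 1 ∈ A ↔ pos = true) := by
  simp [Ffin, Finset.mem_filter, Finset.mem_powerset]

lemma Ffin_false_true (m : ℕ) (hm : 2 ≤ m) : (Ffin m false true).card = 2 ^ (m - 1) := by
  apply card_filter_one m hm
  intro A hA
  simp only [if_neg (by simp : ¬(false = true))]
  constructor
  · exact fun h => h.2.mpr (by simp)
  · exact fun h => ⟨⟨_, h⟩, by simp [h]⟩

lemma Ffin_false_false (m : ℕ) (hm : 2 ≤ m) : (Ffin m false false).card = 2 ^ (m - 1) - 1 := by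
  have he : Ffin m false false = ((Finset.range (m-1)).powerset).erase ∅ := by
    ext A
    simp only [mem_Ffin, Finset.mem_erase, Finset.mem_powerset,
      if_neg (by simp : ¬(false = true))]
    constructor
    · rintro ⟨hsub, hne, hmem⟩
      simp only [Bool.false_eq_true, iff_false] at hmem
      refine ⟨hne.ne_empty, fun x hx => ?_⟩
      have h1 := hsub hx
      have h2 : x ≠ m - 1 := fun h => hmem (h ▸ hx)
      simp only [Finset.mem_range] at h1 ⊢
      omega
    · rintro ⟨hne, hsub⟩
      have hx : ∀ x ∈ A, x < m - 1 := fun x hx => Finset.mem_range.mp (hsub hx)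
      refine ⟨fun x hxx => Finset.mem_range.mpr (by have := hx x hxx; omega),
        Finset.nonempty_iff_ne_empty.2 hne, by
          simp only [Bool.false_eq_true, iff_false]
          intro hmem
          have := hx _ hmem; omega⟩
  rw [he, Finset.card_erase_of_mem (by simp), Finset.card_powerset, Finset.card_range]

lemma Ffin_true_true (m : ℕ) (hm : 2 ≤ m) : (Ffin m true true).card = 2 ^ (m - 2) := by
  have he : Ffin m true true
      = (Finset.Ioo 0 (m-1)).powerset.image (fun B => insert 0 (insert (m-1) B)) := by
    ext A
    simp only [mem_Ffin, Finset.mem_image, Finset.mem_powerset, if_pos rfl]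
    constructor
    · rintro ⟨hsub, h0, hmem⟩
      simp only [iff_true] at hmem
      refine ⟨(A.erase 0).erase (m-1), fun x hx => ?_, ?_⟩
      · simp only [Finset.mem_erase] at hx
        have := hsub hx.2.2
        simp only [Finset.mem_range] at this
        simp only [Finset.mem_Ioo]
        omega
      · rw [Finset.insert_erase (Finset.mem_erase.mpr ⟨by omega, hmem⟩),
          Finset.insert_erase h0]
    · rintro ⟨B, hB, rfl⟩
      have hx : ∀ x ∈ B, 0 < x ∧ x < m - 1 := fun x hx => Finset.mem_Ioo.mp (hB hx)
      refine ⟨fun x hxx => ?_, by simp, by simp⟩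
      simp only [Finset.mem_insert] at hxx
      rcases hxx with rfl | rfl | hxx
      · simp; omega
      · simp; omega
      · have := hx _ hxx; simp only [Finset.mem_range]; omega
  rw [he, Finset.card_image_of_injOn, Finset.card_powerset, Nat.card_Ioo]
  · have harith : m - 1 - 0 - 1 = m - 2 := by omega
    rw [harith]
  intro B hB B' hB' hh
  simp only [Finset.coe_powerset, Set.mem_preimage, Finset.mem_coe, Set.mem_powerset_iff,
    Finset.coe_subset] at hB hB'
  have key : ∀ C : Finset ℕ, C ⊆ Finset.Ioo 0 (m-1) →
      ((insert 0 (insert (m-1) C)).erase 0).erase (m-1) = C := by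
    intro C hC
    have h0 : 0 ∉ insert (m-1) C := by
      simp only [Finset.mem_insert]
      rintro (h | h)
      · omega
      · have := Finset.mem_Ioo.mp (hC h); omega
    have h1 : (m-1) ∉ C := fun h => by have := Finset.mem_Ioo.mp (hC h); omega
    rw [Finset.erase_insert h0, Finset.erase_insert h1]
  have hh' : insert 0 (insert (m-1) B) = insert 0 (insert (m-1) B') := hh
  rw [← key B hB, ← key B' hB', hh']

lemma Ffin_true_false (m : ℕ) (hm : 2 ≤ m) : (Ffin m true false).card = 2 ^ (m - 2) := by
  have he : Ffin m true false = (Finset.Ioo 0 (m-1)).powerset.image (insert 0) := by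
    ext A
    simp only [mem_Ffin, Finset.mem_image, Finset.mem_powerset, if_pos rfl]
    constructor
    · rintro ⟨hsub, h0, hmem⟩
      simp only [Bool.false_eq_true, iff_false] at hmem
      refine ⟨A.erase 0, fun x hx => ?_, Finset.insert_erase h0⟩
      simp only [Finset.mem_erase] at hx
      have := hsub hx.2
      simp only [Finset.mem_range] at this
      have : x ≠ m - 1 := fun h => hmem (h ▸ hx.2)
      simp only [Finset.mem_Ioo]
      have h2 := hsub hx.2
      simp only [Finset.mem_range] at h2
      omega
    · rintro ⟨B, hB, rfl⟩
      have hx : ∀ x ∈ B, 0 < x ∧ x < m - 1 := fun x hx => Finset.mem_Ioo.mp (hB hx)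
      refine ⟨fun x hxx => ?_, by simp, by
        simp only [Bool.false_eq_true, iff_false, Finset.mem_insert]
        rintro (h | h)
        · omega
        · have := hx _ h; omega⟩
      simp only [Finset.mem_insert] at hxx
      rcases hxx with rfl | hxx
      · simp; omega
      · have := hx _ hxx; simp only [Finset.mem_range]; omega
  rw [he, Finset.card_image_of_injOn, Finset.card_powerset, Nat.card_Ioo]
  · have harith : m - 1 - 0 - 1 = m - 2 := by omega
    rw [harith]
  refine insert_injOn_aux _ _ (fun B hB h0 => ?_)
  simp only [Finset.mem_powerset] at hB
  have := Finset.mem_Ioo.mp (hB h0); omega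

lemma Tpm_finite (n : ℕ → ℕ) (j : ℕ) (b : Bool) : (Tpm n j b).Finite := by
  classical
  have hfin : (Set.univ.pi (fun k : Fin j =>
      (↑((Finset.range (n k)).powerset) : Set (Finset ℕ)))).Finite :=
    Set.Finite.pi (fun _ => Finset.finite_toSet _)
  apply Set.Finite.subset (hfin.image
    (fun f : Fin j → Finset ℕ => fun k : ℕ => if h : k < j then f ⟨k, h⟩ else ∅))
  rintro S ⟨h1, h2, -, -, -, -⟩
  refine ⟨fun k : Fin j => S k, fun k _ => ?_, ?_⟩
  · exact Finset.mem_coe.mpr (Finset.mem_powerset.mpr (h2 k k.isLt))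
  · funext k
    by_cases h : k < j
    · simp [h]
    · simp only [dif_neg h]
      exact (h1 k (by omega)).symm

lemma ncard_prod_finset {β : Type} (s : Set (ℕ → Finset ℕ)) (hs : s.Finite) (F : Finset β) :
    (s ×ˢ (↑F : Set β)).ncard = s.ncard * F.card := by
  classical
  rw [Set.ncard_eq_toFinset_card _ (hs.prod F.finite_toSet),
    ← Set.Finite.toFinset_prod hs F.finite_toSet, Finset.card_product,
    Set.ncard_eq_toFinset_card _ hs]
  congr 1
  simp

lemma Tpm_rec (n : ℕ → ℕ) (j : ℕ) (hj : 2 ≤ j) (hm : 2 ≤ n (j - 1)) (pos : Bool) :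
    (Tpm n j pos).ncard
      = (Tpm n (j-1) false).ncard * (Ffin (n (j-1)) false pos).card
        + (Tpm n (j-1) true).ncard * (Ffin (n (j-1)) true pos).card := by
  classical
  set m := n (j - 1) with hmdef
  set Φ : (ℕ → Finset ℕ) → (ℕ → Finset ℕ) × Finset ℕ :=
    fun S => (fun k => if k < j - 1 then S k else ∅, S (j - 1)) with hΦ
  set U : Set ((ℕ → Finset ℕ) × Finset ℕ) :=
    (Tpm n (j-1) false) ×ˢ (↑(Ffin m false pos) : Set (Finset ℕ)) ∪
    (Tpm n (j-1) true) ×ˢ (↑(Ffin m true pos) : Set (Finset ℕ)) with hU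
  have hbij : Set.BijOn Φ (Tpm n j pos) U := by
    refine ⟨?_, ?_, ?_⟩
    · -- MapsTo
      rintro S ⟨h1, h2, h3, h4, h5, h6⟩
      have hT : ∀ b : Bool, ((n (j-2) - 1 ∈ S (j-2)) ↔ b = true) →
          (fun k => if k < j - 1 then S k else ∅) ∈ Tpm n (j-1) b := by
        intro b hb
        refine ⟨fun k hk => by simp [Nat.not_lt.mpr hk], fun k hk => ?_, fun k hk => ?_,
          fun h0 => ?_, fun k hk => ?_, fun _ => ?_⟩
        · simpa [hk] using h2 k (by omega)
        · simpa [hk] using h3 k (by omega)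
        · simpa [show (0:ℕ) < j - 1 from h0] using h4 (by omega)
        · simp only [if_pos (by omega : k < j - 1), if_pos (by omega : k + 1 < j - 1)]
          exact h5 k (by omega)
        · have e : j - 1 - 1 = j - 2 := by omega
          simpa [e, show j - 2 < j - 1 by omega] using hb
      by_cases hcase : n (j-2) - 1 ∈ S (j-2)
      · refine Set.mem_union_right _ ⟨hT true (by simp [hcase]), ?_⟩
        simp only [Finset.mem_coe, mem_Ffin, if_pos rfl]
        refine ⟨h2 _ (by omega), ?_, h6 (by omega)⟩
        have := h5 (j-2) (by omega) hcase
        simpa [show j - 2 + 1 = j - 1 by omega] using this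
      · refine Set.mem_union_left _ ⟨hT false (by simp [hcase]), ?_⟩
        simp only [Finset.mem_coe, mem_Ffin, if_neg (by simp : ¬(false = true))]
        exact ⟨h2 _ (by omega), h3 _ (by omega), h6 (by omega)⟩
    · -- InjOn
      rintro S ⟨h1, -, -, -, -, -⟩ S' ⟨h1', -, -, -, -, -⟩ heq
      have heq1 := congrArg Prod.fst heq
      have heq2 := congrArg Prod.snd heq
      simp only [hΦ] at heq1 heq2
      funext k
      by_cases hk : k < j - 1
      · have := congrFun heq1 k
        simpa [hk] using this
      · by_cases hk2 : k = j - 1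
        · exact hk2 ▸ heq2
        · rw [h1 k (by omega), h1' k (by omega)]
    · -- SurjOn
      rintro ⟨T, A⟩ (⟨hT, hA⟩ | ⟨hT, hA⟩) <;>
      [(obtain ⟨g1, g2, g3, g4, g5, g6⟩ := hT;
        rw [Finset.mem_coe, mem_Ffin] at hA;
        obtain ⟨hA1, hA2, hA3⟩ := hA;
        simp only [if_neg (by simp : ¬(false = true))] at hA2;
        refine ⟨fun k => if k < j - 1 then T k else if k = j - 1 then A else ∅, ?_, ?_⟩);
       (obtain ⟨g1, g2, g3, g4, g5, g6⟩ := hT;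
        rw [Finset.mem_coe, mem_Ffin] at hA;
        obtain ⟨hA1, hA2, hA3⟩ := hA;
        simp only [if_pos rfl] at hA2;
        refine ⟨fun k => if k < j - 1 then T k else if k = j - 1 then A else ∅, ?_, ?_⟩)]
      · -- membership, b = false
        refine ⟨fun k hk => by simp only [if_neg (by omega : ¬ k < j - 1),
            if_neg (by omega : ¬ k = j - 1)], fun k hk => ?_, fun k hk => ?_,
          fun _ => ?_, fun k hk => ?_, fun _ => ?_⟩
        · by_cases h : k < j - 1
          · simpa [h] using g2 k h
          · have hk1 : k = j - 1 := by omega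
            simpa [h, hk1] using hA1
        · by_cases h : k < j - 1
          · simpa [h] using g3 k h
          · have hk1 : k = j - 1 := by omega
            simpa [h, hk1] using hA2
        · simpa [show (0:ℕ) < j - 1 by omega] using g4 (by omega)
        · by_cases h : k + 1 < j - 1
          · simp only [if_pos (by omega : k < j - 1), if_pos h]
            exact g5 k h
          · have hk1 : k + 1 = j - 1 := by omega
            simp only [if_pos (by omega : k < j - 1), if_neg (by omega : ¬ k + 1 < j - 1),
              if_pos hk1]
            intro hmem
            exact absurd hmem (by
              have := g6 (by omega)
              simp only [Bool.false_eq_true, iff_false] at this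
              have e : j - 1 - 1 = k := by omega
              rwa [e] at this)
        · simp only [if_neg (lt_irrefl _), if_pos rfl]
          exact hA3
      · -- Φ S = (T, A), b = false
        refine Prod.ext ?_ ?_
        · funext k
          by_cases h : k < j - 1
          · simp [hΦ, h]
          · simp only [hΦ, if_neg h]
            exact (g1 k (by omega)).symm
        · simp [hΦ]
      · -- membership, b = true
        refine ⟨fun k hk => by simp only [if_neg (by omega : ¬ k < j - 1),
            if_neg (by omega : ¬ k = j - 1)], fun k hk => ?_, fun k hk => ?_,
          fun _ => ?_, fun k hk => ?_, fun _ => ?_⟩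
        · by_cases h : k < j - 1
          · simpa [h] using g2 k h
          · have hk1 : k = j - 1 := by omega
            simpa [h, hk1] using hA1
        · by_cases h : k < j - 1
          · simpa [h] using g3 k h
          · have hk1 : k = j - 1 := by omega
            simpa [h, hk1] using ⟨0, hA2⟩
        · simpa [show (0:ℕ) < j - 1 by omega] using g4 (by omega)
        · by_cases h : k + 1 < j - 1
          · simp only [if_pos (by omega : k < j - 1), if_pos h]
            exact g5 k h
          · have hk1 : k + 1 = j - 1 := by omega
            simp only [if_pos (by omega : k < j - 1), if_neg (by omega : ¬ k + 1 < j - 1),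
              if_pos hk1]
            intro _
            exact hA2
        · simp only [if_neg (lt_irrefl _), if_pos rfl]
          exact hA3
      · -- Φ S = (T, A), b = true
        refine Prod.ext ?_ ?_
        · funext k
          by_cases h : k < j - 1
          · simp [hΦ, h]
          · simp only [hΦ, if_neg h]
            exact (g1 k (by omega)).symm
        · simp [hΦ]
  have himg : Φ '' Tpm n j pos = U := hbij.image_eq
  have hdisj : Disjoint ((Tpm n (j-1) false) ×ˢ (↑(Ffin m false pos) : Set (Finset ℕ)))
      ((Tpm n (j-1) true) ×ˢ (↑(Ffin m true pos) : Set (Finset ℕ))) := by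
    rw [Set.disjoint_left]
    rintro ⟨T, A⟩ ⟨hT1, -⟩ ⟨hT2, -⟩
    have h6a := hT1.2.2.2.2.2 (by omega)
    have h6b := hT2.2.2.2.2.2 (by omega)
    simp only [Bool.false_eq_true, iff_false, iff_true] at h6a h6b
    exact h6a h6b
  calc (Tpm n j pos).ncard = (Φ '' Tpm n j pos).ncard :=
        (Set.ncard_image_of_injOn hbij.injOn).symm
    _ = U.ncard := by rw [himg]
    _ = _ := by
        rw [hU, Set.ncard_union_eq hdisj
          ((Tpm_finite n (j-1) false).prod (Finset.finite_toSet _))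
          ((Tpm_finite n (j-1) true).prod (Finset.finite_toSet _)),
          ncard_prod_finset _ (Tpm_finite n (j-1) false),
          ncard_prod_finset _ (Tpm_finite n (j-1) true)]

lemma Tpm_one_false (n : ℕ → ℕ) (h : 2 ≤ n 0) : (Tpm n 1 false).ncard = n 0 - 1 := by
  classical
  have he : Tpm n 1 false
      = (fun i => fun k => if k = 0 then ({i} : Finset ℕ) else ∅) ''
          ↑(Finset.range (n 0 - 1)) := by
    ext S
    constructor
    · rintro ⟨h1, h2, h3, h4, h5, h6⟩
      obtain ⟨i, hi⟩ := Finset.card_eq_one.mp (h4 one_pos)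
      have hir : i < n 0 := by
        have := h2 0 one_pos (hi ▸ Finset.mem_singleton_self i)
        simpa using this
      have hine : i ≠ n 0 - 1 := by
        intro hcon
        have := (h6 one_pos).mp (by rw [hi]; simp [hcon])
        simp at this
      refine ⟨i, by simp only [Finset.mem_coe, Finset.mem_range]; omega, ?_⟩
      funext k
      by_cases hk : k = 0
      · simp [hk, hi]
      · simp only [if_neg hk]
        exact (h1 k (by omega)).symm
    · rintro ⟨i, hi, rfl⟩
      simp only [Finset.mem_coe, Finset.mem_range] at hi
      refine ⟨fun k hk => if_neg (by omega),
        fun k hk => ?_, fun k hk => ?_, fun _ => by simp, fun k hk => by omega,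
        fun _ => ?_⟩
      · have hk0 : k = 0 := by omega
        subst hk0
        intro x hx
        have hx' : x = i := Finset.mem_singleton.mp hx
        exact Finset.mem_range.mpr (by omega)
      · have hk0 : k = 0 := by omega
        subst hk0
        exact ⟨i, Finset.mem_singleton_self i⟩
      · constructor
        · intro hcon
          have hc : n 0 - 1 = i := Finset.mem_singleton.mp hcon
          exact absurd hc (by omega)
        · intro hcon; simp at hcon
  rw [he, Set.ncard_image_of_injOn, Set.ncard_coe_finset, Finset.card_range]
  intro i _ i' _ hh
  have := congrFun hh 0
  simpa using this

lemma Tpm_one_true (n : ℕ → ℕ) (h : 2 ≤ n 0) : (Tpm n 1 true).ncard = 1 := by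
  classical
  have he : Tpm n 1 true
      = {fun k => if k = 0 then ({n 0 - 1} : Finset ℕ) else ∅} := by
    ext S
    constructor
    · rintro ⟨h1, h2, h3, h4, h5, h6⟩
      obtain ⟨i, hi⟩ := Finset.card_eq_one.mp (h4 one_pos)
      have hie : i = n 0 - 1 := by
        have h6' : n 0 - 1 ∈ S 0 := (h6 one_pos).mpr rfl
        rw [hi, Finset.mem_singleton] at h6'
        exact h6'.symm
      simp only [Set.mem_singleton_iff]
      funext k
      by_cases hk : k = 0
      · simp [hk, hi, hie]
      · simp only [if_neg hk]
        exact h1 k (by omega)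
    · rintro rfl
      refine ⟨fun k hk => if_neg (by omega),
        fun k hk => ?_, fun k hk => ?_, fun _ => by simp, fun k hk => by omega,
        fun _ => iff_of_true (Finset.mem_singleton_self _) rfl⟩
      · have hk0 : k = 0 := by omega
        subst hk0
        intro x hx
        have hx' : x = n 0 - 1 := Finset.mem_singleton.mp hx
        exact Finset.mem_range.mpr (by omega)
      · have hk0 : k = 0 := by omega
        subst hk0
        exact ⟨n 0 - 1, Finset.mem_singleton_self _⟩
  rw [he, Set.ncard_singleton]

/-- The crossing recurrence: `#T^-_1 = n_1 − 1`, `#T^+_1 = 1`, and for `2 ≤ j ≤ α`,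
`#T^-_j = (2^{n_j−1} − 1)·#T^-_{j−1} + 2^{n_j−2}·#T^+_{j−1}` and
`#T^+_j = 2^{n_j−1}·#T^-_{j−1} + 2^{n_j−2}·#T^+_{j−1}`.
(`n_j` of the paper is `n (j-1)` here.) -/
theorem Tpm_crossing_recurrence (α : ℕ) (hα : 1 ≤ α) (n : ℕ → ℕ)
    (hn : ∀ i, i < α → 2 ≤ n i) :
    (Tpm n 1 false).ncard = n 0 - 1 ∧
    (Tpm n 1 true).ncard = 1 ∧
    (∀ j, 2 ≤ j → j ≤ α →
      (Tpm n j false).ncard =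
        (2 ^ (n (j - 1) - 1) - 1) * (Tpm n (j - 1) false).ncard +
          2 ^ (n (j - 1) - 2) * (Tpm n (j - 1) true).ncard ∧
      (Tpm n j true).ncard =
        2 ^ (n (j - 1) - 1) * (Tpm n (j - 1) false).ncard +
          2 ^ (n (j - 1) - 2) * (Tpm n (j - 1) true).ncard) := by
  have h0 : 2 ≤ n 0 := hn 0 (by omega)
  refine ⟨Tpm_one_false n h0, Tpm_one_true n h0, fun j hj2 hjα => ?_⟩
  have hm : 2 ≤ n (j - 1) := hn (j - 1) (by omega)
  constructor
  · rw [Tpm_rec n j hj2 hm false, Ffin_false_false _ hm, Ffin_true_false _ hm,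
      mul_comm, mul_comm (Tpm n (j-1) true).ncard]
  · rw [Tpm_rec n j hj2 hm true, Ffin_false_true _ hm, Ffin_true_true _ hm,
      mul_comm, mul_comm (Tpm n (j-1) true).ncard]
end

section
/- For α = 3 and integers n_1, n_2, n_3 ≥ 2, the number of valid sequences is #T_3 = (n_1 − 1) + 3·2^{n_2+n_3−3}·(2·n_1 − 1) − 2^{n_3}·(n_1 − 1). -/
open Finset

/-- The set `T_α` of valid sequences `(S_1,…,S_α)` (indexed here from `0`, with
`S k = ∅` for `k ≥ α`): each `S_k ⊆ {0,…,n_k−1}`, `S_0` is a singleton (P1),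
`S_k = ∅` implies `S_{k+1} = ∅` (P2), and `n_k − 1 ∈ S_k` implies `0 ∈ S_{k+1}` (P3). -/
def Tset (n : ℕ → ℕ) (α : ℕ) : Set (ℕ → Finset ℕ) :=
  {S | (∀ k, α ≤ k → S k = ∅) ∧
       (∀ k, k < α → S k ⊆ Finset.range (n k)) ∧
       (0 < α → (S 0).card = 1) ∧
       (∀ k, k + 1 < α → S k = ∅ → S (k + 1) = ∅) ∧
       (∀ k, k + 1 < α → n k - 1 ∈ S k → 0 ∈ S (k + 1))}

/-- Auxiliary map from triples to sequences. -/
def tripFun (p : ℕ × Finset ℕ × Finset ℕ) : ℕ → Finset ℕ :=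
  fun k => if k = 0 then {p.1} else if k = 1 then p.2.1 else if k = 2 then p.2.2 else ∅

lemma tripFun_injective : Function.Injective tripFun := by
  intro p q h
  have h0 := congrFun h 0
  have h1 := congrFun h 1
  have h2 := congrFun h 2
  simp only [tripFun] at h0 h1 h2
  norm_num at h0 h1 h2
  obtain ⟨a, b, c⟩ := p
  obtain ⟨a', b', c'⟩ := q
  simp_all [Finset.singleton_inj]

/-- Counting subsets of `s` containing a fixed subset `u`. -/
lemma card_powerset_filter_subset (s u : Finset ℕ) (h : u ⊆ s) :
    ((s.powerset).filter (fun t => u ⊆ t)).card = 2 ^ (s.card - u.card) := by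
  have himg : (s.powerset).filter (fun t => u ⊆ t) = ((s \ u).powerset).image (· ∪ u) := by
    ext t
    simp only [mem_filter, mem_powerset, mem_image]
    constructor
    · rintro ⟨hts, hut⟩
      exact ⟨t \ u, sdiff_subset_sdiff hts le_rfl, sdiff_union_of_subset hut⟩
    · rintro ⟨v, hv, rfl⟩
      exact ⟨union_subset ((hv.trans (sdiff_subset)) : v ⊆ s) h, subset_union_right⟩
  rw [himg, card_image_of_injOn, card_powerset, card_sdiff_of_subset h]
  intro v hv w hw hvw
  simp only [coe_powerset, Set.mem_preimage, Set.mem_powerset_iff, coe_sdiff] at hv hw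
  have hv' : Disjoint v u := Finset.disjoint_coe.mp (Set.disjoint_of_subset_left hv
    (Set.disjoint_sdiff_left))
  have hw' : Disjoint w u := Finset.disjoint_coe.mp (Set.disjoint_of_subset_left hw
    (Set.disjoint_sdiff_left))
  dsimp only at hvw
  calc v = (v ∪ u) \ u := (union_sdiff_cancel_right hv').symm
    _ = (w ∪ u) \ u := by rw [hvw]
    _ = w := union_sdiff_cancel_right hw'

lemma card_powerset_filter_mem (m x : ℕ) (hx : x < m) :
    (((Finset.range m).powerset).filter (fun t => x ∈ t)).card = 2 ^ (m - 1) := by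
  have := card_powerset_filter_subset (Finset.range m) {x}
    (singleton_subset_iff.mpr (mem_range.mpr hx))
  simp only [singleton_subset_iff, card_singleton, card_range] at this
  exact this

lemma card_powerset_filter_mem_two (m : ℕ) (hm : 2 ≤ m) :
    (((Finset.range m).powerset).filter (fun t => 0 ∈ t ∧ m - 1 ∈ t)).card = 2 ^ (m - 2) := by
  have hne : (0 : ℕ) ≠ m - 1 := by omega
  have hsub : ({0, m - 1} : Finset ℕ) ⊆ Finset.range m := by
    intro x hx
    simp only [mem_insert, mem_singleton] at hx
    rcases hx with rfl | rfl <;> simp [mem_range] <;> omega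
  have := card_powerset_filter_subset (Finset.range m) {0, m - 1} hsub
  have hcard : ({0, m - 1} : Finset ℕ).card = 2 := by
    rw [card_insert_of_notMem (by simp [hne]), card_singleton]
  rw [hcard, card_range] at this
  rw [← this]
  congr 1
  apply Finset.filter_congr
  intro t _
  simp [insert_subset_iff]

/-- Generic sum of a two-valued indicator. -/
lemma sum_ite_const {α : Type*} (s : Finset α) (p : α → Prop) [DecidablePred p] (c d : ℕ) :
    ∑ t ∈ s, (if p t then c else d) =
      (s.filter p).card * c + (s.filter (fun t => ¬ p t)).card * d := by
  rw [← Finset.sum_filter_add_sum_filter_not s p]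
  congr 1
  · rw [Finset.sum_congr rfl (fun t ht => if_pos (mem_filter.mp ht).2), sum_const, smul_eq_mul]
  · rw [Finset.sum_congr rfl (fun t ht => if_neg (mem_filter.mp ht).2), sum_const, smul_eq_mul]

/-- For `α = 3` and `n_1, n_2, n_3 ≥ 2`, the number of valid sequences is
`#T_3 = (n_1 − 1) + 3·2^{n_2+n_3−3}·(2·n_1 − 1) − 2^{n_3}·(n_1 − 1)`
(here `n_1 = n 0`, `n_2 = n 1`, `n_3 = n 2`). -/
theorem Tset_three_card (n : ℕ → ℕ) (hn1 : 2 ≤ n 0) (hn2 : 2 ≤ n 1) (hn3 : 2 ≤ n 2) :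
    ((Tset n 3).ncard : ℤ) =
      ((n 0 : ℤ) - 1) + 3 * 2 ^ (n 1 + n 2 - 3) * (2 * (n 0 : ℤ) - 1) -
        2 ^ (n 2) * ((n 0 : ℤ) - 1) := by
  classical
  set P1 := ((Finset.range (n 1)).powerset) with hP1
  set P2 := ((Finset.range (n 2)).powerset) with hP2
  set Pr : Finset ℕ → Finset ℕ → Prop := fun t u =>
    (t = ∅ → u = ∅) ∧ (n 1 - 1 ∈ t → 0 ∈ u) with hPr
  set T : Finset (ℕ × Finset ℕ × Finset ℕ) :=
    (Finset.range (n 0) ×ˢ P1 ×ˢ P2).filter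
      (fun p => (p.1 = n 0 - 1 → 0 ∈ p.2.1) ∧ Pr p.2.1 p.2.2) with hT
  -- Step 1: Tset n 3 is the image of T under tripFun
  have himage : Tset n 3 = tripFun '' (T : Set (ℕ × Finset ℕ × Finset ℕ)) := by
    ext S
    constructor
    · rintro ⟨h1, h2, h3, h4, h5⟩
      obtain ⟨a, ha⟩ := Finset.card_eq_one.mp (h3 (by norm_num))
      refine ⟨(a, S 1, S 2), ?_, ?_⟩
      · simp only [T, mem_coe, mem_filter, mem_product]
        refine ⟨⟨h2 0 (by norm_num) (ha ▸ mem_singleton_self a), ?_, ?_⟩, ?_, ?_, ?_⟩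
        · exact mem_powerset.mpr (h2 1 (by norm_num))
        · exact mem_powerset.mpr (h2 2 (by norm_num))
        · intro hae
          exact h5 0 (by norm_num) (by rw [ha, hae]; exact mem_singleton_self _)
        · exact h4 1 (by norm_num)
        · exact h5 1 (by norm_num)
      · funext k
        match k with
        | 0 => simp [tripFun, ha]
        | 1 => simp [tripFun]
        | 2 => simp [tripFun]
        | (k+3) => simp only [tripFun]; rw [h1 (k+3) (by omega)]; simp
    · rintro ⟨p, hp, rfl⟩
      simp only [T, mem_coe, mem_filter, mem_product, hP1, hP2, hPr, mem_powerset] at hp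
      obtain ⟨⟨hpa, hpb, hpc⟩, hQ1, hQ2, hQ3⟩ := hp
      refine ⟨?_, ?_, ?_, ?_, ?_⟩
      · intro k hk
        have h0 : k ≠ 0 := by omega
        have h1 : k ≠ 1 := by omega
        have h2 : k ≠ 2 := by omega
        simp [tripFun, h0, h1, h2]
      · intro k hk
        match k with
        | 0 => simpa [tripFun] using hpa
        | 1 => simpa [tripFun] using hpb
        | 2 => simpa [tripFun] using hpc
      · intro _; simp [tripFun]
      · intro k hk
        match k with
        | 0 => intro h; exact absurd h (by simp [tripFun])
        | 1 => simpa [tripFun] using hQ2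
      · intro k hk
        match k with
        | 0 =>
          intro h
          have h' : n 0 - 1 = p.1 := by simpa [tripFun] using h
          simpa [tripFun] using hQ1 h'.symm
        | 1 => simpa [tripFun] using hQ3
  have hcardT : (Tset n 3).ncard = T.card := by
    rw [himage, Set.ncard_image_of_injective _ tripFun_injective, Set.ncard_coe_finset]
  -- Step 2: count T
  -- abbreviations
  set X := 2 ^ (n 2 - 1) with hX
  set Y := 2 ^ (n 2) with hY
  -- inner sum over S2
  have hinner : ∀ a : ℕ, ∀ t : Finset ℕ,
      (∑ u ∈ P2, if ((a = n 0 - 1 → 0 ∈ t) ∧ Pr t u) then 1 else 0) =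
      if (a = n 0 - 1 → 0 ∈ t) then
        (if t = ∅ then 1 else if n 1 - 1 ∈ t then X else Y) else 0 := by
    intro a t
    by_cases hA : a = n 0 - 1 → 0 ∈ t
    · rw [if_pos hA]
      by_cases hE : t = ∅
      · rw [if_pos hE]
        subst hE
        have : ∀ u ∈ P2, (if ((a = n 0 - 1 → 0 ∈ (∅ : Finset ℕ)) ∧ Pr ∅ u) then 1 else 0)
            = if u = ∅ then 1 else 0 := by
          intro u _
          simp only [hPr, Finset.notMem_empty, false_implies, imp_self, true_and, and_true]
          congr 1
          simp [eq_iff_iff]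
          tauto
        rw [Finset.sum_congr rfl this, Finset.sum_ite_eq' P2 ∅ (fun _ => 1),
          if_pos (Finset.empty_mem_powerset _)]
      · rw [if_neg hE]
        by_cases hL : n 1 - 1 ∈ t
        · rw [if_pos hL]
          have : ∀ u ∈ P2, (if ((a = n 0 - 1 → 0 ∈ t) ∧ Pr t u) then 1 else 0)
              = if 0 ∈ u then 1 else 0 := by
            intro u _
            simp only [hPr]
            congr 1
            simp only [eq_iff_iff]
            constructor
            · rintro ⟨_, _, h2⟩; exact h2 hL
            · intro h; exact ⟨hA, fun he => absurd he hE, fun _ => h⟩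
          rw [Finset.sum_congr rfl this, ← Finset.card_filter, hX, hP2]
          exact card_powerset_filter_mem (n 2) 0 (by omega)
        · rw [if_neg hL]
          have : ∀ u ∈ P2, (if ((a = n 0 - 1 → 0 ∈ t) ∧ Pr t u) then 1 else 0) = 1 := by
            intro u _
            rw [if_pos ⟨hA, fun he => absurd he hE, fun h => absurd h hL⟩]
          rw [Finset.sum_congr rfl this, Finset.sum_const, smul_eq_mul, mul_one, hY, hP2,
            card_powerset, card_range]
    · rw [if_neg hA]
      apply Finset.sum_eq_zero
      intro u _
      rw [if_neg]
      tauto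
  -- cardinalities of filters of P1
  have hc_last : (P1.filter (fun t => n 1 - 1 ∈ t)).card = 2 ^ (n 1 - 1) :=
    card_powerset_filter_mem (n 1) (n 1 - 1) (by omega)
  have hc_P1 : P1.card = 2 ^ (n 1) := by rw [hP1, card_powerset, card_range]
  have hc_notlast : (P1.filter (fun t => ¬ n 1 - 1 ∈ t)).card = 2 ^ (n 1 - 1) := by
    have := Finset.card_filter_add_card_filter_not
      (s := P1) (p := fun t => n 1 - 1 ∈ t)
    rw [hc_last, hc_P1] at this
    have h2 : 2 ^ (n 1 - 1) + 2 ^ (n 1 - 1) = 2 ^ (n 1) := by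
      rw [← two_mul, ← pow_succ']
      congr 1
      omega
    omega
  have hc_zero : (P1.filter (fun t => 0 ∈ t)).card = 2 ^ (n 1 - 1) :=
    card_powerset_filter_mem (n 1) 0 (by omega)
  have hc_zero_last : ((P1.filter (fun t => 0 ∈ t)).filter (fun t => n 1 - 1 ∈ t)).card
      = 2 ^ (n 1 - 2) := by
    rw [Finset.filter_filter]
    exact card_powerset_filter_mem_two (n 1) hn2
  have hc_zero_notlast : ((P1.filter (fun t => 0 ∈ t)).filter (fun t => ¬ n 1 - 1 ∈ t)).card
      = 2 ^ (n 1 - 2) := by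
    have := Finset.card_filter_add_card_filter_not
      (s := P1.filter (fun t => 0 ∈ t)) (p := fun t => n 1 - 1 ∈ t)
    rw [hc_zero_last, hc_zero] at this
    have h2 : 2 ^ (n 1 - 2) + 2 ^ (n 1 - 2) = 2 ^ (n 1 - 1) := by
      rw [← two_mul, ← pow_succ']
      congr 1
      omega
    omega
  -- the empty set filters
  have hempty_mem : (∅ : Finset ℕ) ∈ P1.filter (fun t => ¬ n 1 - 1 ∈ t) := by
    simp [hP1]
  have hc_ne : ((P1.filter (fun t => ¬ n 1 - 1 ∈ t)).filter (fun t => t = ∅)).card = 1 := by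
    have : (P1.filter (fun t => ¬ n 1 - 1 ∈ t)).filter (fun t => t = ∅) = {∅} := by
      ext t
      simp only [mem_filter, mem_singleton, hP1, mem_powerset]
      constructor
      · rintro ⟨_, h⟩; exact h
      · rintro rfl; simp
    rw [this, card_singleton]
  have hc_ne' : ((P1.filter (fun t => ¬ n 1 - 1 ∈ t)).filter (fun t => ¬ t = ∅)).card
      = 2 ^ (n 1 - 1) - 1 := by
    have := Finset.card_filter_add_card_filter_not
      (s := P1.filter (fun t => ¬ n 1 - 1 ∈ t)) (p := fun t => t = ∅)
    rw [hc_ne, hc_notlast] at this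
    omega
  -- middle sum values
  set N : ℕ := 2 ^ (n 1 - 1) * X + (1 + (2 ^ (n 1 - 1) - 1) * Y) with hN
  set M : ℕ := 2 ^ (n 1 - 2) * X + 2 ^ (n 1 - 2) * Y with hM
  have hmid : ∀ a : ℕ,
      (∑ t ∈ P1, if (a = n 0 - 1 → 0 ∈ t) then
        (if t = ∅ then 1 else if n 1 - 1 ∈ t then X else Y) else 0) =
      if a = n 0 - 1 then M else N := by
    intro a
    by_cases ha : a = n 0 - 1
    · rw [if_pos ha]
      have step : ∀ t ∈ P1, (if (a = n 0 - 1 → 0 ∈ t) then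
          (if t = ∅ then 1 else if n 1 - 1 ∈ t then X else Y) else 0)
          = if 0 ∈ t then (if n 1 - 1 ∈ t then X else Y) else 0 := by
        intro t _
        by_cases h0 : 0 ∈ t
        · have hne := Finset.ne_empty_of_mem h0
          simp [h0, hne]
        · simp [ha, h0]
      rw [Finset.sum_congr rfl step, ← Finset.sum_filter,
        sum_ite_const (P1.filter (fun t => 0 ∈ t)) (fun t => n 1 - 1 ∈ t) X Y,
        hc_zero_last, hc_zero_notlast]
    · rw [if_neg ha]
      have step : ∀ t ∈ P1, (if (a = n 0 - 1 → 0 ∈ t) then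
          (if t = ∅ then 1 else if n 1 - 1 ∈ t then X else Y) else 0)
          = if n 1 - 1 ∈ t then X else (if t = ∅ then 1 else Y) := by
        intro t _
        rw [if_pos (fun h => absurd h ha)]
        by_cases hL : n 1 - 1 ∈ t
        · have hne := Finset.ne_empty_of_mem hL
          simp [hL, hne]
        · simp [hL]
      rw [Finset.sum_congr rfl step, ← Finset.sum_filter_add_sum_filter_not P1
        (fun t => n 1 - 1 ∈ t)]
      have e1 : ∑ t ∈ P1.filter (fun t => n 1 - 1 ∈ t),
          (if n 1 - 1 ∈ t then X else (if t = ∅ then 1 else Y)) = 2 ^ (n 1 - 1) * X := by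
        rw [Finset.sum_congr rfl (fun t ht => if_pos (mem_filter.mp ht).2), sum_const,
          smul_eq_mul, hc_last]
      have e2 : ∑ t ∈ P1.filter (fun t => ¬ n 1 - 1 ∈ t),
          (if n 1 - 1 ∈ t then X else (if t = ∅ then 1 else Y))
          = 1 + (2 ^ (n 1 - 1) - 1) * Y := by
        rw [Finset.sum_congr rfl (fun t ht => if_neg (mem_filter.mp ht).2),
          sum_ite_const (P1.filter (fun t => ¬ n 1 - 1 ∈ t)) (fun t => t = ∅) 1 Y,
          hc_ne, hc_ne', one_mul]
      rw [e1, e2, hN]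
  -- outer sum
  have houter : T.card = 1 * M + (n 0 - 1) * N := by
    rw [hT, Finset.card_filter]
    simp only [Finset.sum_product]
    have : ∀ a ∈ Finset.range (n 0),
        (∑ t ∈ P1, ∑ u ∈ P2,
          if ((a = n 0 - 1 → 0 ∈ t) ∧ Pr t u) then 1 else 0) = if a = n 0 - 1 then M else N := by
      intro a _
      rw [← hmid a]
      exact Finset.sum_congr rfl (fun t _ => hinner a t)
    rw [Finset.sum_congr rfl this,
      sum_ite_const (Finset.range (n 0)) (fun a => a = n 0 - 1) M N]
    congr 2
    · have : (Finset.range (n 0)).filter (fun a => a = n 0 - 1) = {n 0 - 1} := by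
        ext a
        simp only [mem_filter, mem_range, mem_singleton]
        constructor
        · rintro ⟨_, h⟩; exact h
        · rintro rfl; exact ⟨by omega, rfl⟩
      rw [this, card_singleton]
    · have := Finset.card_filter_add_card_filter_not
        (s := Finset.range (n 0)) (p := fun a => a = n 0 - 1)
      have h1 : ((Finset.range (n 0)).filter (fun a => a = n 0 - 1)).card = 1 := by
        have heq : (Finset.range (n 0)).filter (fun a => a = n 0 - 1) = {n 0 - 1} := by
          ext a
          simp only [mem_filter, mem_range, mem_singleton]
          constructor
          · rintro ⟨_, h⟩; exact h
          · rintro rfl; exact ⟨by omega, rfl⟩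
        rw [heq, card_singleton]
      rw [card_range] at this
      omega
  -- Step 3: arithmetic
  rw [hcardT, houter]
  obtain ⟨b, hb⟩ : ∃ b, n 1 = b + 2 := ⟨n 1 - 2, by omega⟩
  obtain ⟨c, hc⟩ : ∃ c, n 2 = c + 2 := ⟨n 2 - 2, by omega⟩
  rw [hM, hN, hX, hY, hb, hc]
  have h1 : b + 2 - 1 = b + 1 := by omega
  have h2 : b + 2 - 2 = b := by omega
  have h3 : c + 2 - 1 = c + 1 := by omega
  have h4 : b + 2 + (c + 2) - 3 = b + c + 1 := by omega
  rw [h1, h2, h3, h4]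
  have hcast1 : (1 : ℕ) ≤ 2 ^ (b + 1) := Nat.one_le_two_pow
  have hcast2 : (1 : ℕ) ≤ n 0 := by omega
  push_cast [Nat.cast_sub hcast1, Nat.cast_sub hcast2]
  ring
end

section
/- With the convention m_0 = 0, the polynomials m_i = Σ_{c ⊨ i} (−1)^{|c|+i}·(3/2)^{Θ(c)}·[c] satisfy m_1 = x_1 and, for all i ≥ 2, m_i = ((3/2)·x_i − 1)·m_{i−1} + (1/2)·x_i·m_{i−2}. -/
open MvPolynomial

/-- The monomial `[c] = x_1·x_{1+c_1}·x_{1+c_1+c_2}···x_{1+c_1+⋯+c_{ℓ−1}}` attached to a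
composition with list of parts `l` (with the convention `[()] = 0` for the empty list). -/
noncomputable def brk (l : List ℕ) : MvPolynomial ℕ ℚ :=
  if l.length = 0 then 0
  else ∏ k ∈ Finset.range l.length, X (1 + (l.take k).sum)

/-- `Θ(c) = #{ j : 1 ≤ j ≤ ℓ−1, c_j = 1 }`, the number of parts equal to `1` among the
first `ℓ−1` parts of the composition with parts `l`. -/
def theta (l : List ℕ) : ℕ :=
  ((l.take (l.length - 1)).filter (· == 1)).length

/- auxiliary list lemmas -/

lemma exists_concat_of_ne_nil {l : List ℕ} (h : l ≠ []) : ∃ t a, l = t ++ [a] := by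
  rcases List.eq_nil_or_concat l with h' | ⟨t, a, h'⟩
  · exact absurd h' h
  · exact ⟨t, a, by simpa [List.concat_eq_append] using h'⟩

lemma brk_concat_eq (t : List ℕ) (a b : ℕ) : brk (t ++ [a]) = brk (t ++ [b]) := by
  unfold brk
  simp only [List.length_append, List.length_singleton]
  refine if_congr Iff.rfl rfl (Finset.prod_congr rfl fun k hk => ?_)
  have hk' : k ≤ t.length := by
    have := Finset.mem_range.1 hk; omega
  rw [List.take_append_of_le_length hk', List.take_append_of_le_length hk']

lemma theta_concat (t : List ℕ) (a : ℕ) :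
    theta (t ++ [a]) = (t.filter (· == 1)).length := by
  unfold theta
  simp only [List.length_append, List.length_singleton, Nat.add_sub_cancel]
  rw [List.take_left]

lemma brk_append_one {l : List ℕ} (h : l ≠ []) :
    brk (l ++ [1]) = brk l * X (1 + l.sum) := by
  have hl : l.length ≠ 0 := by simpa [List.length_eq_zero_iff] using h
  unfold brk
  rw [if_neg (by simp), if_neg hl]
  simp only [List.length_append, List.length_singleton]
  rw [Finset.prod_range_succ]
  congr 1
  · refine Finset.prod_congr rfl fun k hk => ?_
    have hk' : k ≤ l.length := by have := Finset.mem_range.1 hk; omega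
    rw [List.take_append_of_le_length hk']
  · rw [List.take_left, ]

lemma theta_append_one {l : List ℕ} (h : l ≠ []) :
    theta (l ++ [1]) = theta l + (if l.getLastD 0 = 1 then 1 else 0) := by
  obtain ⟨t, a, rfl⟩ := exists_concat_of_ne_nil h
  rw [theta_concat (t ++ [a]) 1, theta_concat t a, List.getLastD_concat]
  rw [List.filter_append, List.length_append]
  by_cases ha : a = 1 <;> simp [ha]

lemma brk_dropLast {l : List ℕ} (h : l ≠ []) (x : ℕ) :
    brk (l.dropLast ++ [x]) = brk l := by
  obtain ⟨t, a, rfl⟩ := exists_concat_of_ne_nil h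
  rw [List.dropLast_concat]
  exact brk_concat_eq t x a

lemma theta_dropLast {l : List ℕ} (h : l ≠ []) (x : ℕ) :
    theta (l.dropLast ++ [x]) = theta l := by
  obtain ⟨t, a, rfl⟩ := exists_concat_of_ne_nil h
  rw [List.dropLast_concat, theta_concat, theta_concat]

lemma length_dropLast_concat {l : List ℕ} (h : l ≠ []) (x : ℕ) :
    (l.dropLast ++ [x]).length = l.length := by
  obtain ⟨t, a, rfl⟩ := exists_concat_of_ne_nil h
  simp [List.dropLast_concat]

/- composition helpers -/

lemma comp_blocks_ne_nil {n : ℕ} (c : Composition (n + 1)) : c.blocks ≠ [] := by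
  intro h
  have := c.blocks_sum
  rw [h] at this
  simp at this

lemma getLastD_pos {n : ℕ} (c : Composition (n + 1)) : 0 < c.blocks.getLastD 0 := by
  obtain ⟨t, a, hl⟩ := exists_concat_of_ne_nil (comp_blocks_ne_nil c)
  rw [hl, List.getLastD_concat]
  exact c.blocks_pos (by rw [hl]; simp)

/-- append a block `1` at the end -/
def appendOne {n : ℕ} (d : Composition n) : Composition (n + 1) where
  blocks := d.blocks ++ [1]
  blocks_pos := by
    intro i hi
    rcases List.mem_append.1 hi with h | h
    · exact d.blocks_pos h
    · simp at h; omega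
  blocks_sum := by simp [d.blocks_sum]

/-- increase the last block by one -/
def incLast {n : ℕ} (d : Composition (n + 1)) : Composition (n + 2) where
  blocks := d.blocks.dropLast ++ [d.blocks.getLastD 0 + 1]
  blocks_pos := by
    intro i hi
    rcases List.mem_append.1 hi with h | h
    · exact d.blocks_pos ((List.dropLast_sublist _).subset h)
    · simp at h; omega
  blocks_sum := by
    obtain ⟨t, a, hl⟩ := exists_concat_of_ne_nil (comp_blocks_ne_nil d)
    have hs := d.blocks_sum
    rw [hl] at hs ⊢
    rw [List.dropLast_concat, List.getLastD_concat]
    simp at hs ⊢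
    omega

lemma sum_last_one {M : Type*} [AddCommMonoid M] (n : ℕ) (f : List ℕ → M) :
    ∑ c ∈ Finset.univ.filter (fun c : Composition (n + 1) => c.blocks.getLastD 0 = 1),
        f c.blocks
      = ∑ d : Composition n, f (d.blocks ++ [1]) := by
  refine (Finset.sum_bij (fun d _ => appendOne d) ?_ ?_ ?_ ?_).symm
  · intro d _
    simp only [Finset.mem_filter, Finset.mem_univ, true_and]
    show (d.blocks ++ [1]).getLastD 0 = 1
    exact List.getLastD_concat
  · intro d₁ _ d₂ _ h
    have : d₁.blocks ++ [1] = d₂.blocks ++ [1] := congrArg Composition.blocks h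
    exact Composition.ext (List.append_cancel_right this)
  · intro c hc
    have hc1 : c.blocks.getLastD 0 = 1 := (Finset.mem_filter.1 hc).2
    obtain ⟨t, a, hl⟩ := exists_concat_of_ne_nil (comp_blocks_ne_nil c)
    have ha : a = 1 := by rw [hl, List.getLastD_concat] at hc1; exact hc1
    have hts : t.sum = n := by
      have := c.blocks_sum
      rw [hl, List.sum_append] at this
      simp [ha] at this
      omega
    refine ⟨⟨t, fun hi => c.blocks_pos (by rw [hl]; exact List.mem_append_left _ hi), hts⟩,
      Finset.mem_univ _, ?_⟩
    exact Composition.ext (by show t ++ [1] = c.blocks; rw [hl, ha])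
  · intro d _
    rfl

lemma sum_last_ne_one {M : Type*} [AddCommMonoid M] (n : ℕ) (f : List ℕ → M) :
    ∑ c ∈ Finset.univ.filter (fun c : Composition (n + 2) => ¬ c.blocks.getLastD 0 = 1),
        f c.blocks
      = ∑ d : Composition (n + 1), f (d.blocks.dropLast ++ [d.blocks.getLastD 0 + 1]) := by
  refine (Finset.sum_bij (fun d _ => incLast d) ?_ ?_ ?_ ?_).symm
  · intro d _
    simp only [Finset.mem_filter, Finset.mem_univ, true_and]
    show ¬ (d.blocks.dropLast ++ [d.blocks.getLastD 0 + 1]).getLastD 0 = 1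
    rw [List.getLastD_concat]
    have := getLastD_pos d
    omega
  · intro d₁ _ d₂ _ h
    have h' : d₁.blocks.dropLast ++ [d₁.blocks.getLastD 0 + 1]
        = d₂.blocks.dropLast ++ [d₂.blocks.getLastD 0 + 1] := congrArg Composition.blocks h
    obtain ⟨t₁, a₁, hl₁⟩ := exists_concat_of_ne_nil (comp_blocks_ne_nil d₁)
    obtain ⟨t₂, a₂, hl₂⟩ := exists_concat_of_ne_nil (comp_blocks_ne_nil d₂)
    rw [hl₁, hl₂, List.dropLast_concat, List.dropLast_concat, List.getLastD_concat,
      List.getLastD_concat] at h'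
    have ht := congrArg List.dropLast h'
    rw [List.dropLast_concat, List.dropLast_concat] at ht
    have ha := congrArg (fun l : List ℕ => l.getLastD 0) h'
    simp only [List.getLastD_concat] at ha
    refine Composition.ext ?_
    rw [hl₁, hl₂, ht]
    congr 1
    simp
    omega
  · intro c hc
    have hc1 : ¬ c.blocks.getLastD 0 = 1 := (Finset.mem_filter.1 hc).2
    have hpos := getLastD_pos c
    obtain ⟨t, a, hl⟩ := exists_concat_of_ne_nil (comp_blocks_ne_nil c)
    rw [hl, List.getLastD_concat] at hc1 hpos
    have ha2 : 2 ≤ a := by omega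
    have hts : t.sum + (a - 1) = n + 1 := by
      have := c.blocks_sum
      rw [hl, List.sum_append] at this
      simp at this
      omega
    refine ⟨⟨t ++ [a - 1], ?_, by rw [List.sum_append]; simpa using hts⟩,
      Finset.mem_univ _, ?_⟩
    · intro i hi
      rcases List.mem_append.1 hi with h | h
      · exact c.blocks_pos (by rw [hl]; exact List.mem_append_left _ h)
      · simp at h; omega
    · refine Composition.ext ?_
      show (t ++ [a - 1]).dropLast ++ [(t ++ [a - 1]).getLastD 0 + 1] = c.blocks
      rw [List.dropLast_concat, List.getLastD_concat, hl]
      congr 2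
      omega
  · intro d _
    rfl

/-- `m_i = Σ_{c ⊨ i} (−1)^{|c|+i}·(3/2)^{Θ(c)}·[c]` (thanks to the convention `[()] = 0`
this gives `m_0 = 0`). -/
noncomputable def mPoly (i : ℕ) : MvPolynomial ℕ ℚ :=
  ∑ c : Composition i,
    C ((-1 : ℚ) ^ (c.length + i) * (3 / 2 : ℚ) ^ theta c.blocks) * brk c.blocks

lemma mPoly_zero : mPoly 0 = 0 := by
  refine Finset.sum_eq_zero fun c _ => ?_
  have hb : c.blocks = [] := by
    cases hb : c.blocks with
    | nil => rfl
    | cons a t =>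
      have := c.blocks_sum
      have ha := c.blocks_pos (by rw [hb]; exact List.mem_cons_self)
      rw [hb] at this
      simp [List.sum_cons] at this
      omega
  rw [hb]
  simp [brk]

lemma list_sum_one {l : List ℕ} (hp : ∀ x ∈ l, 0 < x) (hs : l.sum = 1) : l = [1] := by
  match l with
  | [] => simp at hs
  | [a] => simp at hs; simp [hs]
  | a :: b :: t =>
    have ha := hp a (by simp)
    have hb := hp b (by simp)
    simp [List.sum_cons] at hs
    omega

lemma mPoly_one : mPoly 1 = X 1 := by
  have h1 : ∀ c : Composition 1, c.blocks = [1] :=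
    fun c => list_sum_one (fun _ h => c.blocks_pos h) c.blocks_sum
  rw [mPoly]
  rw [Finset.sum_eq_single_of_mem (⟨[1], by simp, by simp⟩ : Composition 1)
    (Finset.mem_univ _) (fun b _ hb => absurd (Composition.ext ((h1 b).trans rfl)) hb)]
  have hlen : (⟨[1], by simp, by simp⟩ : Composition 1).length = 1 := rfl
  rw [hlen]
  norm_num [theta, brk]

lemma sum_ne_one_eq (n : ℕ) :
    ∑ c ∈ Finset.univ.filter (fun c : Composition (n + 1) => ¬ c.blocks.getLastD 0 = 1),
        C ((-1 : ℚ) ^ (c.blocks.length + (n + 1)) * (3 / 2 : ℚ) ^ theta c.blocks) * brk c.blocks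
      = - mPoly n := by
  cases n with
  | zero =>
    rw [mPoly_zero, neg_zero]
    refine Finset.sum_eq_zero fun c hc => ?_
    have hc1 := (Finset.mem_filter.1 hc).2
    have : c.blocks = [1] := list_sum_one (fun _ h => c.blocks_pos h) c.blocks_sum
    rw [this] at hc1
    simp at hc1
  | succ m =>
    rw [sum_last_ne_one (n := m)
      (f := fun l => C ((-1 : ℚ) ^ (l.length + (m + 2)) * (3 / 2 : ℚ) ^ theta l) * brk l)]
    rw [mPoly, ← Finset.sum_neg_distrib]
    refine Finset.sum_congr rfl fun d _ => ?_
    have hne := comp_blocks_ne_nil d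
    rw [length_dropLast_concat hne, theta_dropLast hne, brk_dropLast hne]
    rw [← neg_mul, ← map_neg, Composition.blocks_length]
    congr 2
    ring

lemma mPoly_rec (n : ℕ) :
    mPoly (n + 2) = (C (3 / 2 : ℚ) * X (n + 2) - 1) * mPoly (n + 1) +
      C (1 / 2 : ℚ) * X (n + 2) * mPoly n := by
  have hC : (C (3 / 2 : ℚ) + C (-(1 / 2) : ℚ) : MvPolynomial ℕ ℚ) = 1 := by
    rw [← map_add]
    norm_num
  -- rewrite mPoly (n+2) using the split
  have hsplit : mPoly (n + 2)
      = (∑ c ∈ Finset.univ.filter (fun c : Composition (n + 2) => c.blocks.getLastD 0 = 1),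
          C ((-1 : ℚ) ^ (c.blocks.length + (n + 2)) * (3 / 2 : ℚ) ^ theta c.blocks) * brk c.blocks)
        + ∑ c ∈ Finset.univ.filter (fun c : Composition (n + 2) => ¬ c.blocks.getLastD 0 = 1),
          C ((-1 : ℚ) ^ (c.blocks.length + (n + 2)) * (3 / 2 : ℚ) ^ theta c.blocks) * brk c.blocks := by
    rw [Finset.sum_filter_add_sum_filter_not]
    rw [mPoly]
  rw [hsplit, sum_ne_one_eq (n + 1), sum_last_one (n + 1)
    (f := fun l => C ((-1 : ℚ) ^ (l.length + (n + 2)) * (3 / 2 : ℚ) ^ theta l) * brk l)]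
  -- per-term transformation of the first sum
  have hterm : ∀ d : Composition (n + 1),
      C ((-1 : ℚ) ^ ((d.blocks ++ [1]).length + (n + 2)) * (3 / 2 : ℚ) ^ theta (d.blocks ++ [1]))
          * brk (d.blocks ++ [1])
        = C (3 / 2 : ℚ) * X (n + 2) *
            (C ((-1 : ℚ) ^ (d.blocks.length + (n + 1)) * (3 / 2 : ℚ) ^ theta d.blocks)
              * brk d.blocks)
          + (if ¬ d.blocks.getLastD 0 = 1 then
              C (-(1 / 2) : ℚ) * X (n + 2) *
                (C ((-1 : ℚ) ^ (d.blocks.length + (n + 1)) * (3 / 2 : ℚ) ^ theta d.blocks)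
                  * brk d.blocks)
            else 0) := by
    intro d
    have hne := comp_blocks_ne_nil d
    rw [brk_append_one hne, theta_append_one hne, d.blocks_sum, List.length_append]
    have hx : 1 + (n + 1) = n + 2 := by omega
    rw [hx]
    have hsign : (-1 : ℚ) ^ (d.blocks.length + [1].length + (n + 2))
        = (-1 : ℚ) ^ (d.blocks.length + (n + 1)) := by
      have h2 : d.blocks.length + [1].length + (n + 2)
          = d.blocks.length + (n + 1) + 2 := by simp; omega
      rw [h2, pow_add]
      norm_num
    rw [hsign]
    by_cases h : d.blocks.getLastD 0 = 1
    · rw [if_pos h, if_neg (by simpa using h)]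
      simp only [pow_succ, map_mul]
      ring
    · rw [if_neg h, if_pos h, add_zero]
      have : C ((-1 : ℚ) ^ (d.blocks.length + (n + 1)) * (3 / 2 : ℚ) ^ theta d.blocks)
            * (brk d.blocks * X (n + 2))
          = (C (3 / 2 : ℚ) + C (-(1 / 2) : ℚ)) *
            (C ((-1 : ℚ) ^ (d.blocks.length + (n + 1)) * (3 / 2 : ℚ) ^ theta d.blocks)
              * (brk d.blocks * X (n + 2))) := by
        rw [hC, one_mul]
      rw [this]
      ring
  rw [Finset.sum_congr rfl fun d _ => hterm d, Finset.sum_add_distrib]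
  -- now handle the two sums
  have h1 : ∑ d : Composition (n + 1),
      C (3 / 2 : ℚ) * X (n + 2) *
        (C ((-1 : ℚ) ^ (d.blocks.length + (n + 1)) * (3 / 2 : ℚ) ^ theta d.blocks)
          * brk d.blocks)
      = C (3 / 2 : ℚ) * X (n + 2) * mPoly (n + 1) := by
    rw [mPoly, Finset.mul_sum]
  have h2 : ∑ d : Composition (n + 1),
      (if ¬ d.blocks.getLastD 0 = 1 then
        C (-(1 / 2) : ℚ) * X (n + 2) *
          (C ((-1 : ℚ) ^ (d.blocks.length + (n + 1)) * (3 / 2 : ℚ) ^ theta d.blocks)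
            * brk d.blocks)
      else 0)
      = C (-(1 / 2) : ℚ) * X (n + 2) * (- mPoly n) := by
    rw [← sum_ne_one_eq n, ← Finset.sum_filter, Finset.mul_sum]
  rw [h1, h2]
  have hneg : (C (-(1 / 2) : ℚ) : MvPolynomial ℕ ℚ) = - C (1 / 2 : ℚ) := by
    rw [← map_neg]
  rw [hneg]
  ring

/-- With the convention `m_0 = 0`, the polynomials
`m_i = Σ_{c ⊨ i} (−1)^{|c|+i}·(3/2)^{Θ(c)}·[c]` satisfy `m_1 = x_1` and, for all `i ≥ 2`,
`m_i = ((3/2)·x_i − 1)·m_{i−1} + (1/2)·x_i·m_{i−2}`. -/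
theorem mPoly_recurrence :
    mPoly 0 = 0 ∧
    mPoly 1 = X 1 ∧
    ∀ i, 2 ≤ i →
      mPoly i = (C (3 / 2 : ℚ) * X i - 1) * mPoly (i - 1) +
        C (1 / 2 : ℚ) * X i * mPoly (i - 2) := by
  refine ⟨mPoly_zero, mPoly_one, fun i hi => ?_⟩
  obtain ⟨n, rfl⟩ : ∃ n, i = n + 2 := ⟨i - 2, by omega⟩
  have h1 : n + 2 - 1 = n + 1 := rfl
  have h2 : n + 2 - 2 = n := rfl
  rw [h1, h2, mPoly_rec]
end

section
/- For every i ≥ 0, the coefficient of y in the polynomial s^-_i (which is homogeneous of degree 1 in the variables y, z) equals Σ_{c ⊨ i} (−1)^{|c|+i}·(3/2)^{Θ(c)}·[c], where for i = 0 this sum is 0. -/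
open MvPolynomial

/-- We work in `ℚ[x_1,x_2,…][y,z]`: polynomials in the two variables `y` (encoded `false`)
and `z` (encoded `true`) over the ring `ℚ[x_1,x_2,…]`.  `sPair j = (s^-_j, s^+_j)` where
`s^-_0 = z`, `s^+_0 = 2y`, and for `j ≥ 1`,
`s^-_j = (x_j − 1)·s^-_{j−1} + (1/2)·x_j·s^+_{j−1}`,
`s^+_j = x_j·s^-_{j−1} + (1/2)·x_j·s^+_{j−1}`. -/
noncomputable def sPair : ℕ →
    MvPolynomial Bool (MvPolynomial ℕ ℚ) × MvPolynomial Bool (MvPolynomial ℕ ℚ)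
  | 0 => (X true, 2 * X false)
  | j + 1 =>
    ((C (X (j + 1) : MvPolynomial ℕ ℚ) - 1) * (sPair j).1 +
        C ((MvPolynomial.C (1 / 2 : ℚ) * X (j + 1) : MvPolynomial ℕ ℚ)) * (sPair j).2,
      C (X (j + 1) : MvPolynomial ℕ ℚ) * (sPair j).1 +
        C ((MvPolynomial.C (1 / 2 : ℚ) * X (j + 1) : MvPolynomial ℕ ℚ)) * (sPair j).2)

/-- `s^-_j`. -/
noncomputable def smP (j : ℕ) : MvPolynomial Bool (MvPolynomial ℕ ℚ) := (sPair j).1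

namespace CoeffAux

/-- number of parts equal to 1 (all of them, including the last one). -/
def theta' (l : List ℕ) : ℕ := (l.filter (· == 1)).length

noncomputable def wA (n : ℕ) (c : Composition n) : MvPolynomial ℕ ℚ :=
  MvPolynomial.C ((-1 : ℚ) ^ (c.length + n) * (3 / 2 : ℚ) ^ theta c.blocks) * brk c.blocks

noncomputable def wB (n : ℕ) (c : Composition n) : MvPolynomial ℕ ℚ :=
  MvPolynomial.C ((-1 : ℚ) ^ (c.length + n) * (3 / 2 : ℚ) ^ theta' c.blocks) * brk c.blocks

noncomputable def A (n : ℕ) : MvPolynomial ℕ ℚ := ∑ c : Composition n, wA n c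

noncomputable def B (n : ℕ) : MvPolynomial ℕ ℚ := ∑ c : Composition n, wB n c

lemma blocks_ne_nil {n : ℕ} (c : Composition (n + 1)) : c.blocks ≠ [] := by
  intro h
  have := c.blocks_sum
  rw [h] at this
  simp at this

lemma sum_dropLast {l : List ℕ} (h : l ≠ []) : l.dropLast.sum + l.getLast h = l.sum := by
  conv_rhs => rw [← List.dropLast_append_getLast h]
  simp

/-- append a part equal to 1 at the end. -/
def e1 {n : ℕ} (c : Composition n) : Composition (n + 1) :=
  ⟨c.blocks ++ [1], by
    intro i hi
    rcases List.mem_append.1 hi with h | h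
    · exact c.blocks_pos h
    · simp at h; omega, by simp [c.blocks_sum]⟩

/-- increment the last part. -/
def e2 {n : ℕ} (c : Composition (n + 1)) : Composition (n + 2) :=
  ⟨c.blocks.dropLast ++ [c.blocks.getLast (blocks_ne_nil c) + 1], by
    intro i hi
    rcases List.mem_append.1 hi with h | h
    · exact c.blocks_pos ((List.dropLast_sublist _).subset h)
    · simp at h; omega, by
    have h1 := sum_dropLast (blocks_ne_nil c)
    have h2 := c.blocks_sum
    rw [List.sum_append]
    simp only [List.sum_cons, List.sum_nil]
    omega⟩

/-- remove the last part (which is equal to 1). -/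
def d1 {n : ℕ} (d : Composition (n + 2))
    (h : d.blocks.getLast (blocks_ne_nil d) = 1) : Composition (n + 1) :=
  ⟨d.blocks.dropLast, fun hi => d.blocks_pos ((List.dropLast_sublist _).subset hi), by
    have h1 := sum_dropLast (blocks_ne_nil d)
    have h2 := d.blocks_sum
    omega⟩

/-- decrement the last part (which is ≥ 2). -/
def d2 {n : ℕ} (d : Composition (n + 2))
    (h : d.blocks.getLast (blocks_ne_nil d) ≠ 1) : Composition (n + 1) :=
  ⟨d.blocks.dropLast ++ [d.blocks.getLast (blocks_ne_nil d) - 1], by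
    intro i hi
    have hg : 0 < d.blocks.getLast (blocks_ne_nil d) :=
      d.blocks_pos (List.getLast_mem _)
    rcases List.mem_append.1 hi with h' | h'
    · exact d.blocks_pos ((List.dropLast_sublist _).subset h')
    · simp at h'; omega, by
    have h1 := sum_dropLast (blocks_ne_nil d)
    have h2 := d.blocks_sum
    have hg : 0 < d.blocks.getLast (blocks_ne_nil d) :=
      d.blocks_pos (List.getLast_mem _)
    rw [List.sum_append]
    simp only [List.sum_cons, List.sum_nil]
    omega⟩

lemma getLast_e1 {n : ℕ} (c : Composition n) :
    (e1 c).blocks.getLast (blocks_ne_nil _) = 1 := by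
  simp only [e1]
  exact List.getLast_concat

lemma getLast_e2 {n : ℕ} (c : Composition (n + 1)) :
    (e2 c).blocks.getLast (blocks_ne_nil _) =
      c.blocks.getLast (blocks_ne_nil c) + 1 := by
  simp only [e2]
  exact List.getLast_concat

noncomputable def compEquiv (n : ℕ) :
    Composition (n + 1) ⊕ Composition (n + 1) ≃ Composition (n + 2) where
  toFun := Sum.elim (fun c => e1 c) (fun c => e2 c)
  invFun d :=
    if h : d.blocks.getLast (blocks_ne_nil d) = 1 then Sum.inl (d1 d h)
    else Sum.inr (d2 d h)
  left_inv s := by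
    rcases s with c | c
    · dsimp only [Sum.elim_inl]
      rw [dif_pos (getLast_e1 c)]
      congr 1
      apply Composition.ext
      simp [d1, e1]
    · have hg : 0 < c.blocks.getLast (blocks_ne_nil c) :=
        c.blocks_pos (List.getLast_mem _)
      dsimp only [Sum.elim_inr]
      rw [dif_neg (by rw [getLast_e2]; omega)]
      congr 1
      apply Composition.ext
      simp only [d2, e2, List.dropLast_concat, getLast_e2]
      rw [List.getLast_concat]
      simp only [Nat.add_sub_cancel]
      exact List.dropLast_append_getLast _
  right_inv d := by
    by_cases h : d.blocks.getLast (blocks_ne_nil d) = 1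
    · dsimp only
      rw [dif_pos h]
      dsimp only [Sum.elim_inl]
      apply Composition.ext
      simp only [e1, d1]
      conv_rhs => rw [← List.dropLast_append_getLast (blocks_ne_nil d)]
      rw [h]
    · dsimp only
      rw [dif_neg h]
      dsimp only [Sum.elim_inr]
      have hg : 0 < d.blocks.getLast (blocks_ne_nil d) :=
        d.blocks_pos (List.getLast_mem _)
      apply Composition.ext
      simp only [e2, d2, List.dropLast_concat]
      rw [List.getLast_concat]
      have : d.blocks.getLast (blocks_ne_nil d) - 1 + 1
          = d.blocks.getLast (blocks_ne_nil d) := by omega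
      rw [this]
      exact List.dropLast_append_getLast _

lemma sum_split (n : ℕ) (f : Composition (n + 2) → MvPolynomial ℕ ℚ) :
    ∑ d : Composition (n + 2), f d =
      (∑ c : Composition (n + 1), f (e1 c)) + ∑ c : Composition (n + 1), f (e2 c) := by
  rw [← Equiv.sum_comp (compEquiv n) f, Fintype.sum_sum_type]
  rfl

/-! ### Weight lemmas -/

lemma brk_append_one {l : List ℕ} (hl : l ≠ []) :
    brk (l ++ [1]) = brk l * X (1 + l.sum) := by
  have hlen0 : l.length ≠ 0 := fun h => hl (List.length_eq_zero_iff.1 h)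
  unfold brk
  rw [if_neg (by simp), if_neg hlen0]
  have hlen : (l ++ [1]).length = l.length + 1 := by simp
  rw [hlen, Finset.prod_range_succ]
  congr 1
  · apply Finset.prod_congr rfl
    intro k hk
    rw [List.take_append_of_le_length (le_of_lt (Finset.mem_range.1 hk))]
  · rw [List.take_append_of_le_length le_rfl, List.take_length]

lemma brk_mod_last {l : List ℕ} (hl : l ≠ []) (g : ℕ) :
    brk (l.dropLast ++ [g]) = brk l := by
  have hlen0 : l.length ≠ 0 := fun h => hl (List.length_eq_zero_iff.1 h)
  have hdl : l.dropLast.length = l.length - 1 := List.length_dropLast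
  have hlen : (l.dropLast ++ [g]).length = l.length := by
    simp [hdl]; omega
  unfold brk
  rw [if_neg (by rw [hlen]; exact hlen0), if_neg hlen0, hlen]
  apply Finset.prod_congr rfl
  intro k hk
  have hk' : k < l.length := Finset.mem_range.1 hk
  have h1 : (l.dropLast ++ [g]).take k = l.dropLast.take k :=
    List.take_append_of_le_length (by omega)
  have h2 : l.dropLast.take k = l.take k := by
    rw [List.dropLast_eq_take, List.take_take]
    congr 1
    omega
  rw [h1, h2]

lemma theta_append_one (l : List ℕ) : theta (l ++ [1]) = theta' l := by
  unfold theta theta'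
  have h1 : (l ++ [1]).length - 1 = l.length := by simp
  rw [h1, List.take_append_of_le_length le_rfl, List.take_length]

lemma theta'_append_one (l : List ℕ) : theta' (l ++ [1]) = theta' l + 1 := by
  unfold theta'
  rw [List.filter_append]
  simp

lemma take_pred_eq_dropLast (l : List ℕ) {m : List ℕ} (hlen : m.length = l.length)
    (hpre : ∀ k, k < l.length → m.take k = l.dropLast.take k) : True := trivial

lemma theta_mod_last {l : List ℕ} (hl : l ≠ []) (g : ℕ) :
    theta (l.dropLast ++ [g]) = theta l := by
  have hlen0 : l.length ≠ 0 := fun h => hl (List.length_eq_zero_iff.1 h)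
  have hdl : l.dropLast.length = l.length - 1 := List.length_dropLast
  unfold theta
  have h1 : (l.dropLast ++ [g]).length - 1 = l.dropLast.length := by simp
  rw [h1, List.take_append_of_le_length le_rfl, List.take_length]
  rw [List.dropLast_eq_take]

lemma theta'_mod_last {l : List ℕ} (hl : l ≠ []) {g : ℕ} (hg : g ≠ 1) :
    theta' (l.dropLast ++ [g]) = theta l := by
  unfold theta' theta
  rw [List.filter_append]
  have : List.filter (· == 1) [g] = [] := by simp [hg]
  rw [this, List.append_nil, List.dropLast_eq_take]

/-! ### Values at small `n` -/

lemma comp_zero_blocks (c : Composition 0) : c.blocks = [] := by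
  rcases h : c.blocks with _ | ⟨a, t⟩
  · rfl
  · exfalso
    have hs := c.blocks_sum
    rw [h] at hs
    have ha : 0 < a := c.blocks_pos (by rw [h]; exact List.mem_cons_self)
    simp only [List.sum_cons] at hs
    omega

lemma comp_one_blocks (c : Composition 1) : c.blocks = [1] := by
  rcases h : c.blocks with _ | ⟨a, t⟩
  · exfalso
    have hs := c.blocks_sum
    rw [h] at hs
    simp at hs
  · have hs := c.blocks_sum
    rw [h] at hs
    simp only [List.sum_cons] at hs
    have ha : 0 < a := c.blocks_pos (by rw [h]; exact List.mem_cons_self)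
    have ht : t = [] := by
      rcases t with _ | ⟨b, t'⟩
      · rfl
      · exfalso
        have hb : 0 < b := c.blocks_pos (by rw [h]; simp)
        simp only [List.sum_cons] at hs
        omega
    subst ht
    simp only [List.sum_nil, add_zero] at hs
    rw [hs]

lemma A_zero : A 0 = 0 := by
  unfold A
  apply Finset.sum_eq_zero
  intro c _
  unfold wA
  rw [comp_zero_blocks c]
  simp [brk]

lemma brk_one : brk [1] = X 1 := by
  unfold brk
  norm_num

lemma wA_one (c : Composition 1) : wA 1 c = X 1 := by
  unfold wA
  have hb := comp_one_blocks c
  have hlen : c.length = 1 := by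
    unfold Composition.length
    rw [hb]
    rfl
  rw [hb, hlen, brk_one]
  have : theta [1] = 0 := by rfl
  rw [this]
  norm_num

lemma wB_one (c : Composition 1) : wB 1 c = MvPolynomial.C (3 / 2 : ℚ) * X 1 := by
  unfold wB
  have hb := comp_one_blocks c
  have hlen : c.length = 1 := by
    unfold Composition.length
    rw [hb]
    rfl
  rw [hb, hlen, brk_one]
  have : theta' [1] = 1 := by rfl
  rw [this]
  norm_num

lemma card_comp_one : (Finset.univ : Finset (Composition 1)).card = 1 := by
  rw [Finset.card_univ, composition_card]
  norm_num

lemma A_one : A 1 = X 1 := by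
  unfold A
  rw [Finset.sum_congr rfl (fun c _ => wA_one c), Finset.sum_const, card_comp_one,
    one_smul]

lemma B_one : B 1 = MvPolynomial.C (3 / 2 : ℚ) * X 1 := by
  unfold B
  rw [Finset.sum_congr rfl (fun c _ => wB_one c), Finset.sum_const, card_comp_one,
    one_smul]

/-! ### Recurrences for `A` and `B` -/

lemma length_e1 {n : ℕ} (c : Composition n) : (e1 c).length = c.length + 1 := by
  unfold Composition.length e1
  simp

lemma length_e2 {n : ℕ} (c : Composition (n + 1)) : (e2 c).length = c.length := by
  unfold Composition.length e2
  simp only [List.length_append, List.length_dropLast, List.length_cons, List.length_nil]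
  have : 0 < c.blocks.length := List.length_pos_iff.2 (blocks_ne_nil c)
  omega

lemma wA_e1 {n : ℕ} (c : Composition (n + 1)) :
    wA (n + 2) (e1 c) = X (n + 2) * wB (n + 1) c := by
  unfold wA wB
  have hb : (e1 c).blocks = c.blocks ++ [1] := rfl
  rw [hb, length_e1, brk_append_one (blocks_ne_nil c), theta_append_one, c.blocks_sum]
  have h1 : (1 : ℕ) + (n + 1) = n + 2 := by omega
  rw [h1]
  have key : ((-1 : ℚ)) ^ (c.length + 1 + (n + 2)) = ((-1 : ℚ)) ^ (c.length + (n + 1)) := by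
    rw [show c.length + 1 + (n + 2) = (c.length + (n + 1)) + 2 by omega, pow_add]
    norm_num
  rw [key]
  ring

lemma wA_e2 {n : ℕ} (c : Composition (n + 1)) :
    wA (n + 2) (e2 c) = - wA (n + 1) c := by
  unfold wA
  have hb : (e2 c).blocks = c.blocks.dropLast ++ [c.blocks.getLast (blocks_ne_nil c) + 1] :=
    rfl
  rw [hb, length_e2, brk_mod_last (blocks_ne_nil c), theta_mod_last (blocks_ne_nil c)]
  have key : ((-1 : ℚ)) ^ (c.length + (n + 2)) * (3 / 2 : ℚ) ^ theta c.blocks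
      = -(((-1 : ℚ)) ^ (c.length + (n + 1)) * (3 / 2 : ℚ) ^ theta c.blocks) := by
    rw [show c.length + (n + 2) = (c.length + (n + 1)) + 1 by omega, pow_succ]
    ring
  rw [key, map_neg]
  ring

lemma wB_e1 {n : ℕ} (c : Composition (n + 1)) :
    wB (n + 2) (e1 c) = MvPolynomial.C (3 / 2 : ℚ) * X (n + 2) * wB (n + 1) c := by
  unfold wB
  have hb : (e1 c).blocks = c.blocks ++ [1] := rfl
  rw [hb, length_e1, brk_append_one (blocks_ne_nil c), theta'_append_one, c.blocks_sum]
  have h1 : (1 : ℕ) + (n + 1) = n + 2 := by omega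
  rw [h1]
  have key : ((-1 : ℚ)) ^ (c.length + 1 + (n + 2)) * (3 / 2 : ℚ) ^ (theta' c.blocks + 1)
      = (3 / 2 : ℚ) * (((-1 : ℚ)) ^ (c.length + (n + 1)) * (3 / 2 : ℚ) ^ theta' c.blocks) := by
    rw [show c.length + 1 + (n + 2) = (c.length + (n + 1)) + 2 by omega, pow_add, pow_succ]
    ring
  rw [key, map_mul]
  ring

lemma wB_e2 {n : ℕ} (c : Composition (n + 1)) :
    wB (n + 2) (e2 c) = - wA (n + 1) c := by
  unfold wB wA
  have hb : (e2 c).blocks = c.blocks.dropLast ++ [c.blocks.getLast (blocks_ne_nil c) + 1] :=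
    rfl
  have hg : 0 < c.blocks.getLast (blocks_ne_nil c) := c.blocks_pos (List.getLast_mem _)
  rw [hb, length_e2, brk_mod_last (blocks_ne_nil c),
    theta'_mod_last (blocks_ne_nil c) (by omega)]
  have key : ((-1 : ℚ)) ^ (c.length + (n + 2)) * (3 / 2 : ℚ) ^ theta c.blocks
      = -(((-1 : ℚ)) ^ (c.length + (n + 1)) * (3 / 2 : ℚ) ^ theta c.blocks) := by
    rw [show c.length + (n + 2) = (c.length + (n + 1)) + 1 by omega, pow_succ]
    ring
  rw [key, map_neg]
  ring

lemma A_rec (n : ℕ) : A (n + 2) = X (n + 2) * B (n + 1) - A (n + 1) := by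
  unfold A B
  rw [sum_split n (wA (n + 2))]
  rw [Finset.sum_congr rfl (fun c _ => wA_e1 c), Finset.sum_congr rfl (fun c _ => wA_e2 c)]
  rw [Finset.sum_neg_distrib, ← Finset.mul_sum]
  ring

lemma B_rec (n : ℕ) :
    B (n + 2) = MvPolynomial.C (3 / 2 : ℚ) * X (n + 2) * B (n + 1) - A (n + 1) := by
  unfold A B
  rw [sum_split n (wB (n + 2))]
  rw [Finset.sum_congr rfl (fun c _ => wB_e1 c), Finset.sum_congr rfl (fun c _ => wB_e2 c)]
  rw [Finset.sum_neg_distrib, ← Finset.mul_sum]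
  ring

/-! ### Coefficients of `sPair` -/

noncomputable def a (n : ℕ) : MvPolynomial ℕ ℚ :=
  MvPolynomial.coeff (Finsupp.single false 1) (sPair n).1

noncomputable def b (n : ℕ) : MvPolynomial ℕ ℚ :=
  MvPolynomial.coeff (Finsupp.single false 1) (sPair n).2

lemma a_zero : a 0 = 0 := by
  unfold a sPair
  rw [MvPolynomial.coeff_X']
  rw [if_neg]
  intro h
  have := Finsupp.single_eq_single_iff _ _ _ _ |>.1 h
  simp at this

lemma b_zero : b 0 = 2 := by
  unfold b sPair
  simp only
  rw [show ((2 : MvPolynomial Bool (MvPolynomial ℕ ℚ)) * X false)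
      = C 2 * X false from by rw [map_ofNat], MvPolynomial.coeff_C_mul,
    MvPolynomial.coeff_X]
  rw [if_pos rfl, mul_one]

lemma a_succ (n : ℕ) :
    a (n + 1) = (X (n + 1) - 1) * a n + MvPolynomial.C (1 / 2 : ℚ) * X (n + 1) * b n := by
  unfold a b
  show MvPolynomial.coeff _ ((C (X (n + 1) : MvPolynomial ℕ ℚ) - 1) * (sPair n).1 +
      C ((MvPolynomial.C (1 / 2 : ℚ) * X (n + 1) : MvPolynomial ℕ ℚ)) * (sPair n).2) = _
  rw [MvPolynomial.coeff_add, sub_mul, MvPolynomial.coeff_sub, one_mul,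
    MvPolynomial.coeff_C_mul, MvPolynomial.coeff_C_mul]
  ring

lemma b_succ (n : ℕ) :
    b (n + 1) = X (n + 1) * a n + MvPolynomial.C (1 / 2 : ℚ) * X (n + 1) * b n := by
  unfold a b
  show MvPolynomial.coeff _ (C (X (n + 1) : MvPolynomial ℕ ℚ) * (sPair n).1 +
      C ((MvPolynomial.C (1 / 2 : ℚ) * X (n + 1) : MvPolynomial ℕ ℚ)) * (sPair n).2) = _
  rw [MvPolynomial.coeff_add, MvPolynomial.coeff_C_mul, MvPolynomial.coeff_C_mul]

lemma hhalf : MvPolynomial.C (1 / 2 : ℚ) * (2 : MvPolynomial ℕ ℚ) = 1 := by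
  rw [show (2 : MvPolynomial ℕ ℚ) = MvPolynomial.C (2 : ℚ) from (map_ofNat _ 2).symm,
    ← map_mul]
  norm_num

lemma h32 : (MvPolynomial.C (3 / 2 : ℚ) : MvPolynomial ℕ ℚ)
    = MvPolynomial.C (1 / 2 : ℚ) + 1 := by
  rw [show (3 / 2 : ℚ) = 1 / 2 + 1 by norm_num, map_add, map_one]

lemma main (n : ℕ) : a (n + 1) = A (n + 1) ∧ b (n + 1) = 2 * (B (n + 1) - A (n + 1)) := by
  induction n with
  | zero =>
    constructor
    · rw [a_succ, a_zero, b_zero, A_one]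
      simp only [Nat.zero_add]
      linear_combination (X 1 : MvPolynomial ℕ ℚ) * hhalf
    · rw [b_succ, a_zero, b_zero, A_one, B_one]
      simp only [Nat.zero_add]
      linear_combination (-(2 * (X 1 : MvPolynomial ℕ ℚ))) * h32
  | succ m ih =>
    obtain ⟨ha, hb⟩ := ih
    constructor
    · rw [a_succ, ha, hb, A_rec]
      linear_combination (X (m + 1 + 1) * B (m + 1) - X (m + 1 + 1) * A (m + 1)) * hhalf
    · rw [b_succ, ha, hb, A_rec, B_rec]
      linear_combination (-(X (m + 1 + 1) * A (m + 1))) * hhalf +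
        (-(2 * X (m + 1 + 1) * B (m + 1))) * h32

end CoeffAux

/-- For every `i ≥ 0`, the coefficient of `y` in `s^-_i` equals
`Σ_{c ⊨ i} (−1)^{|c|+i}·(3/2)^{Θ(c)}·[c]` (which is `0` for `i = 0`). -/
theorem coeff_y_smP (i : ℕ) :
    MvPolynomial.coeff (Finsupp.single false 1) (smP i) =
      ∑ c : Composition i,
        MvPolynomial.C ((-1 : ℚ) ^ (c.length + i) * (3 / 2 : ℚ) ^ theta c.blocks) *
          brk c.blocks := by
  have hrhs : (∑ c : Composition i,
      MvPolynomial.C ((-1 : ℚ) ^ (c.length + i) * (3 / 2 : ℚ) ^ theta c.blocks) *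
        brk c.blocks) = CoeffAux.A i := rfl
  rw [hrhs]
  cases i with
  | zero =>
    rw [CoeffAux.A_zero]
    exact CoeffAux.a_zero
  | succ n =>
    exact (CoeffAux.main n).1
end

section
/- For every α ≥ 1 and integers n_1,…,n_α ≥ 2, the number #T_α of valid sequences equals the value of the polynomial s_{α−1} := s^+_{α−1} + Σ_{j=0}^{α−1} s^-_j under the substitution x_j ↦ 2^{n_{j+1}−1} for 1 ≤ j ≤ α−1, y ↦ 1/2, z ↦ n_1 − 1. -/
open MvPolynomial

/-- `s^+_j`. -/
noncomputable def spP (j : ℕ) : MvPolynomial Bool (MvPolynomial ℕ ℚ) := (sPair j).2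

lemma mem_Tset (n : ℕ → ℕ) (α : ℕ) (S : ℕ → Finset ℕ) :
    S ∈ Tset n α ↔ (∀ k, α ≤ k → S k = ∅) ∧
       (∀ k, k < α → S k ⊆ Finset.range (n k)) ∧
       (0 < α → (S 0).card = 1) ∧
       (∀ k, k + 1 < α → S k = ∅ → S (k + 1) = ∅) ∧
       (∀ k, k + 1 < α → n k - 1 ∈ S k → 0 ∈ S (k + 1)) := Iff.rfl

lemma ext_mem (n : ℕ → ℕ) (α : ℕ) (S : ℕ → Finset ℕ) (T : Finset ℕ)
    (hS : S ∈ Tset n (α + 1)) (hT : T ⊆ Finset.range (n (α + 1)))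
    (h2 : S α = ∅ → T = ∅) (h3 : n α - 1 ∈ S α → 0 ∈ T) :
    Function.update S (α + 1) T ∈ Tset n (α + 2) := by
  obtain ⟨a1, a2, a3, a4, a5⟩ := hS
  refine ⟨fun k hk => ?_, fun k hk => ?_, fun _ => ?_, fun k hk => ?_, fun k hk => ?_⟩
  · rw [Function.update_of_ne (by omega)]
    exact a1 k (by omega)
  · rcases eq_or_ne k (α + 1) with rfl | hne
    · simpa using hT
    · rw [Function.update_of_ne hne]
      rcases Nat.lt_or_ge k (α + 1) with h | h
      · exact a2 k h
      · intro x hx; rw [a1 k (by omega)] at hx; simp at hx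
  · rw [Function.update_of_ne (by omega)]
    exact a3 (by omega)
  · rcases eq_or_ne (k + 1) (α + 1) with he | hne
    · have hk' : k = α := by omega
      subst hk'
      rw [Function.update_of_ne (by omega), Function.update_self]
      exact h2
    · rw [Function.update_of_ne (by omega), Function.update_of_ne hne]
      exact a4 k (by omega)
  · rcases eq_or_ne (k + 1) (α + 1) with he | hne
    · have hk' : k = α := by omega
      subst hk'
      rw [Function.update_of_ne (by omega), Function.update_self]
      exact h3
    · rw [Function.update_of_ne (by omega), Function.update_of_ne hne]
      exact a5 k (by omega)

lemma trunc_mem (n : ℕ → ℕ) (α : ℕ) (S : ℕ → Finset ℕ) (hS : S ∈ Tset n (α + 2)) :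
    Function.update S (α + 1) ∅ ∈ Tset n (α + 1) := by
  obtain ⟨a1, a2, a3, a4, a5⟩ := hS
  refine ⟨fun k hk => ?_, fun k hk => ?_, fun _ => ?_, fun k hk => ?_, fun k hk => ?_⟩
  · rcases eq_or_ne k (α + 1) with rfl | hne
    · simp
    · rw [Function.update_of_ne hne]; exact a1 k (by omega)
  · rw [Function.update_of_ne (by omega)]; exact a2 k (by omega)
  · rw [Function.update_of_ne (by omega)]; exact a3 (by omega)
  · rw [Function.update_of_ne (by omega), Function.update_of_ne (by omega)]
    exact a4 k (by omega)
  · rw [Function.update_of_ne (by omega), Function.update_of_ne (by omega)]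
    exact a5 k (by omega)

lemma Tset_mono_succ (n : ℕ → ℕ) (α : ℕ) (S : ℕ → Finset ℕ) (hS : S ∈ Tset n (α + 1))
    (htop : n α - 1 ∉ S α) : S ∈ Tset n (α + 2) := by
  obtain ⟨a1, a2, a3, a4, a5⟩ := hS
  have hS1 : S (α + 1) = ∅ := a1 _ le_rfl
  refine ⟨fun k hk => a1 k (by omega), fun k hk => ?_, fun _ => a3 (by omega),
    fun k hk => ?_, fun k hk => ?_⟩
  · rcases eq_or_ne k (α + 1) with rfl | hne
    · rw [hS1]; intro x hx; simp at hx
    · exact a2 k (by omega)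
  · rcases eq_or_ne (k + 1) (α + 1) with he | hne
    · intro _; rw [← he] at hS1; exact hS1
    · exact a4 k (by omega)
  · rcases eq_or_ne (k + 1) (α + 1) with he | hne
    · have : k = α := by omega
      subst this
      intro h; exact absurd h htop
    · exact a5 k (by omega)

lemma Tset_anti_succ (n : ℕ → ℕ) (α : ℕ) (S : ℕ → Finset ℕ) (hS : S ∈ Tset n (α + 2))
    (hS1 : S (α + 1) = ∅) : S ∈ Tset n (α + 1) := by
  obtain ⟨a1, a2, a3, a4, a5⟩ := hS
  refine ⟨fun k hk => ?_, fun k hk => a2 k (by omega), fun _ => a3 (by omega),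
    fun k hk => a4 k (by omega), fun k hk => a5 k (by omega)⟩
  rcases eq_or_ne k (α + 1) with rfl | hne
  · exact hS1
  · exact a1 k (by omega)


def extM (n : ℕ → ℕ) (k : ℕ) : Finset (Finset ℕ) :=
  ((Finset.range (n k - 1)).powerset).erase ∅

def extM0 (n : ℕ → ℕ) (k : ℕ) : Finset (Finset ℕ) :=
  ((Finset.range (n k - 1)).powerset).filter (fun T => 0 ∈ T)

def extP (n : ℕ → ℕ) (k : ℕ) : Finset (Finset ℕ) :=
  ((Finset.range (n k)).powerset).filter (fun T => n k - 1 ∈ T)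

def extP0 (n : ℕ → ℕ) (k : ℕ) : Finset (Finset ℕ) :=
  ((Finset.range (n k)).powerset).filter (fun T => 0 ∈ T ∧ n k - 1 ∈ T)

lemma subset_range_pred_iff {m : ℕ} (hm : 1 ≤ m) (T : Finset ℕ) :
    T ⊆ Finset.range (m - 1) ↔ T ⊆ Finset.range m ∧ m - 1 ∉ T := by
  constructor
  · intro h
    refine ⟨fun x hx => ?_, fun hmem => ?_⟩
    · have := h hx; simp at this ⊢; omega
    · have := h hmem; simp at this
  · rintro ⟨h1, h2⟩ x hx
    have h3 := h1 hx
    have h4 : x ≠ m - 1 := fun he => h2 (he ▸ hx)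
    simp at h3 ⊢
    omega

lemma card_extM (n : ℕ → ℕ) (k : ℕ) (h : 2 ≤ n k) :
    (extM n k).card = 2 ^ (n k - 1) - 1 := by
  rw [extM, Finset.card_erase_of_mem (by simp), Finset.card_powerset, Finset.card_range]

lemma card_filter_zero_mem (m : ℕ) (hm : 1 ≤ m) :
    (((Finset.range m).powerset).filter (fun T => 0 ∈ T)).card = 2 ^ (m - 1) := by
  have hsplit := Finset.card_filter_add_card_filter_not
    (s := (Finset.range m).powerset) (p := fun T => 0 ∈ T)
  have hneg : ((Finset.range m).powerset).filter (fun T => ¬ 0 ∈ T)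
      = ((Finset.range m).erase 0).powerset := by
    ext T; simp [Finset.subset_erase, and_comm]
  rw [hneg] at hsplit
  have h0 : (0:ℕ) ∈ Finset.range m := by simp; omega
  have hc : ((Finset.range m).erase 0).card = m - 1 := by
    rw [Finset.card_erase_of_mem h0, Finset.card_range]
  simp only [Finset.card_powerset, Finset.card_range, hc] at hsplit
  have : 2 ^ m = 2 ^ (m - 1) * 2 := by
    rw [← pow_succ]; congr 1; omega
  omega

lemma card_extM0 (n : ℕ → ℕ) (k : ℕ) (h : 2 ≤ n k) :
    (extM0 n k).card = 2 ^ (n k - 2) := by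
  rw [extM0, card_filter_zero_mem _ (by omega)]
  have : n k - 1 - 1 = n k - 2 := by omega
  rw [this]

lemma card_extP (n : ℕ → ℕ) (k : ℕ) (h : 2 ≤ n k) :
    (extP n k).card = 2 ^ (n k - 1) := by
  have hsplit := Finset.card_filter_add_card_filter_not
    (s := (Finset.range (n k)).powerset) (p := fun T => n k - 1 ∈ T)
  have hneg : ((Finset.range (n k)).powerset).filter (fun T => ¬ n k - 1 ∈ T)
      = (Finset.range (n k - 1)).powerset := by
    ext T; simp [subset_range_pred_iff (by omega : 1 ≤ n k)]
  rw [hneg] at hsplit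
  simp only [Finset.card_powerset, Finset.card_range] at hsplit
  rw [extP]
  have : 2 ^ (n k) = 2 ^ (n k - 1) * 2 := by rw [← pow_succ]; congr 1; omega
  omega

lemma card_extP0 (n : ℕ → ℕ) (k : ℕ) (h : 2 ≤ n k) :
    (extP0 n k).card = 2 ^ (n k - 2) := by
  have hsplit := Finset.card_filter_add_card_filter_not
    (s := ((Finset.range (n k)).powerset).filter (fun T => 0 ∈ T))
    (p := fun T => n k - 1 ∈ T)
  have h1 : (((Finset.range (n k)).powerset).filter (fun T => 0 ∈ T)).filter
      (fun T => n k - 1 ∈ T) = extP0 n k := by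
    rw [extP0, Finset.filter_filter]
  have h2 : (((Finset.range (n k)).powerset).filter (fun T => 0 ∈ T)).filter
      (fun T => ¬ n k - 1 ∈ T) = extM0 n k := by
    rw [extM0, Finset.filter_filter]
    ext T
    simp only [Finset.mem_filter, Finset.mem_powerset]
    rw [subset_range_pred_iff (by omega : 1 ≤ n k)]
    tauto
  rw [h1, h2, card_filter_zero_mem _ (by omega), card_extM0 _ _ h] at hsplit
  have : 2 ^ (n k - 1) = 2 ^ (n k - 2) * 2 := by rw [← pow_succ]; congr 1; omega
  omega

def sing (i : ℕ) : ℕ → Finset ℕ := fun k => if k = 0 then {i} else ∅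

open Classical in
noncomputable def EMP (n : ℕ → ℕ) : ℕ →
    Finset (ℕ → Finset ℕ) × Finset (ℕ → Finset ℕ) × Finset (ℕ → Finset ℕ)
  | 0 => (∅, (Finset.range (n 0 - 1)).image sing, {sing (n 0 - 1)})
  | (α + 1) =>
    ((EMP n α).1 ∪ (EMP n α).2.1,
     ((EMP n α).2.1.biUnion (fun S => (extM n (α+1)).image (Function.update S (α+1)))) ∪
     ((EMP n α).2.2.biUnion (fun S => (extM0 n (α+1)).image (Function.update S (α+1)))),
     ((EMP n α).2.1.biUnion (fun S => (extP n (α+1)).image (Function.update S (α+1)))) ∪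
     ((EMP n α).2.2.biUnion (fun S => (extP0 n (α+1)).image (Function.update S (α+1)))))

lemma upd_eq_upd {S S' : ℕ → Finset ℕ} {t : ℕ} {T T' : Finset ℕ}
    (h : Function.update S t T = Function.update S' t T') (hS : S t = ∅) (hS' : S' t = ∅) :
    S = S' ∧ T = T' := by
  constructor
  · funext k
    rcases eq_or_ne k t with rfl | hne
    · rw [hS, hS']
    · have := congrFun h k
      rwa [Function.update_of_ne hne, Function.update_of_ne hne] at this
  · have := congrFun h t
    simpa using this

lemma mem_extM_iff {n : ℕ → ℕ} {k : ℕ} {T : Finset ℕ} :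
    T ∈ extM n k ↔ T ⊆ Finset.range (n k - 1) ∧ T ≠ ∅ := by
  simp [extM, and_comm]

lemma mem_extM0_iff {n : ℕ → ℕ} {k : ℕ} {T : Finset ℕ} :
    T ∈ extM0 n k ↔ T ⊆ Finset.range (n k - 1) ∧ 0 ∈ T := by
  simp [extM0]

lemma mem_extP_iff {n : ℕ → ℕ} {k : ℕ} {T : Finset ℕ} :
    T ∈ extP n k ↔ T ⊆ Finset.range (n k) ∧ n k - 1 ∈ T := by
  simp [extP]

lemma mem_extP0_iff {n : ℕ → ℕ} {k : ℕ} {T : Finset ℕ} :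
    T ∈ extP0 n k ↔ T ⊆ Finset.range (n k) ∧ 0 ∈ T ∧ n k - 1 ∈ T := by
  simp [extP0, and_assoc]

lemma EMP_spec (n : ℕ → ℕ) (α : ℕ) (hn : ∀ i, i ≤ α → 2 ≤ n i) :
    (∀ S, S ∈ (EMP n α).1 ↔ S ∈ Tset n (α+1) ∧ S α = ∅) ∧
    (∀ S, S ∈ (EMP n α).2.1 ↔ S ∈ Tset n (α+1) ∧ S α ≠ ∅ ∧ n α - 1 ∉ S α) ∧
    (∀ S, S ∈ (EMP n α).2.2 ↔ S ∈ Tset n (α+1) ∧ n α - 1 ∈ S α) := by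
  induction α with
  | zero =>
    have hn0 : 2 ≤ n 0 := hn 0 le_rfl
    have hsing : ∀ i, i < n 0 → sing i ∈ Tset n 1 := by
      intro i hi
      refine ⟨fun k hk => ?_, fun k hk => ?_, fun _ => ?_, fun k hk => by omega,
        fun k hk => by omega⟩
      · simp [sing]; omega
      · interval_cases k
        simpa [sing] using hi
      · simp [sing]
    have hback : ∀ S, S ∈ Tset n 1 → ∃ i, i < n 0 ∧ S = sing i := by
      intro S hS
      obtain ⟨a1, a2, a3, _, _⟩ := hS
      obtain ⟨i, hi⟩ := Finset.card_eq_one.mp (a3 one_pos)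
      refine ⟨i, ?_, ?_⟩
      · have : i ∈ S 0 := by rw [hi]; exact Finset.mem_singleton_self i
        have := a2 0 one_pos this
        simpa using this
      · funext k
        rcases Nat.eq_zero_or_pos k with rfl | hk
        · simpa [sing] using hi
        · have hk0 : k ≠ 0 := by omega
          rw [a1 k hk]; simp [sing, hk0]
    refine ⟨fun S => ?_, fun S => ?_, fun S => ?_⟩
    · simp only [EMP]
      constructor
      · intro h; simp at h
      · rintro ⟨hS, h0⟩
        obtain ⟨_, _, a3, _, _⟩ := hS
        have := a3 one_pos
        rw [h0] at this
        simp at this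
    · simp only [EMP, Finset.mem_image, Finset.mem_range]
      constructor
      · rintro ⟨i, hi, rfl⟩
        refine ⟨hsing i (by omega), ?_, ?_⟩
        · simp [sing]
        · simp [sing]; omega
      · rintro ⟨hS, hne, htop⟩
        obtain ⟨i, hi, rfl⟩ := hback S hS
        have : i ≠ n 0 - 1 := by
          intro he; apply htop; simp [sing, he]
        exact ⟨i, by omega, rfl⟩
    · simp only [EMP, Finset.mem_singleton]
      constructor
      · rintro rfl
        exact ⟨hsing _ (by omega), by simp [sing]⟩
      · rintro ⟨hS, htop⟩
        obtain ⟨i, hi, rfl⟩ := hback S hS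
        have : i = n 0 - 1 := by
          simp [sing] at htop; omega
        rw [this]
  | succ α IH =>
    obtain ⟨IHE, IHM, IHP⟩ := IH (fun i hi => hn i (by omega))
    have hnt : 2 ≤ n (α + 1) := hn _ le_rfl
    have hrange : Finset.range (n (α+1) - 1) ⊆ Finset.range (n (α+1)) := by
      intro x hx; simp at hx ⊢; omega
    -- every element of Tset n (α+1) vanishes at α+1
    have hvan : ∀ S : ℕ → Finset ℕ, S ∈ Tset n (α+1) → S (α+1) = ∅ := by
      intro S hS; exact hS.1 (α+1) le_rfl
    refine ⟨fun S => ?_, fun S => ?_, fun S => ?_⟩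
    · -- E
      simp only [EMP, Finset.mem_union]
      constructor
      · intro h
        have hmem : S ∈ Tset n (α+1) ∧ n α - 1 ∉ S α := by
          rcases h with h | h
          · obtain ⟨h1, h2⟩ := (IHE S).mp h
            exact ⟨h1, by rw [h2]; simp⟩
          · obtain ⟨h1, _, h3⟩ := (IHM S).mp h
            exact ⟨h1, h3⟩
        exact ⟨Tset_mono_succ n α S hmem.1 hmem.2, hvan S hmem.1⟩
      · rintro ⟨hS, h1⟩
        have hS' : S ∈ Tset n (α+1) := Tset_anti_succ n α S hS h1
        by_cases hα : S α = ∅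
        · exact Or.inl ((IHE S).mpr ⟨hS', hα⟩)
        · refine Or.inr ((IHM S).mpr ⟨hS', hα, fun htop => ?_⟩)
          have := hS.2.2.2.2 α (by omega) htop
          rw [h1] at this; simp at this
    · -- M
      simp only [EMP, Finset.mem_union, Finset.mem_biUnion, Finset.mem_image]
      constructor
      · rintro (⟨S₀, hS₀, T, hT, rfl⟩ | ⟨S₀, hS₀, T, hT, rfl⟩)
        · obtain ⟨hS₀T, hS₀ne, hS₀top⟩ := (IHM S₀).mp hS₀
          rw [mem_extM_iff] at hT
          refine ⟨ext_mem n α S₀ T hS₀T (hT.1.trans hrange)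
            (fun h => absurd h hS₀ne) (fun h => absurd h hS₀top), ?_, ?_⟩
          · rw [Function.update_self]; exact hT.2
          · rw [Function.update_self]
            intro h
            have := hT.1 h
            simp at this
        · obtain ⟨hS₀T, hS₀top⟩ := (IHP S₀).mp hS₀
          rw [mem_extM0_iff] at hT
          refine ⟨ext_mem n α S₀ T hS₀T (hT.1.trans hrange)
            (fun h => by rw [h] at hS₀top; simp at hS₀top) (fun _ => hT.2), ?_, ?_⟩
          · rw [Function.update_self]
            intro h; rw [h] at hT; simp at hT
          · rw [Function.update_self]
            intro h
            have := hT.1 h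
            simp at this
      · rintro ⟨hS, hne, htop⟩
        have hS₀ : Function.update S (α+1) ∅ ∈ Tset n (α+1) := trunc_mem n α S hS
        have hSα : Function.update S (α+1) ∅ α = S α := Function.update_of_ne (by omega) _ _
        have hsub : S (α+1) ⊆ Finset.range (n (α+1) - 1) := by
          rw [subset_range_pred_iff (by omega)]
          exact ⟨hS.2.1 (α+1) (by omega), htop⟩
        have hupd : Function.update (Function.update S (α+1) ∅) (α+1) (S (α+1)) = S := by
          rw [Function.update_idem, Function.update_eq_self]
        by_cases hα : n α - 1 ∈ S α
        · refine Or.inr ⟨_, (IHP _).mpr ⟨hS₀, by rwa [hSα]⟩, S (α+1), ?_, hupd⟩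
          rw [mem_extM0_iff]
          exact ⟨hsub, hS.2.2.2.2 α (by omega) hα⟩
        · have hSαne : S α ≠ ∅ := by
            intro h
            exact hne (hS.2.2.2.1 α (by omega) h)
          refine Or.inl ⟨_, (IHM _).mpr ⟨hS₀, by rwa [hSα], by rwa [hSα]⟩, S (α+1), ?_, hupd⟩
          rw [mem_extM_iff]
          exact ⟨hsub, hne⟩
    · -- P
      simp only [EMP, Finset.mem_union, Finset.mem_biUnion, Finset.mem_image]
      constructor
      · rintro (⟨S₀, hS₀, T, hT, rfl⟩ | ⟨S₀, hS₀, T, hT, rfl⟩)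
        · obtain ⟨hS₀T, hS₀ne, hS₀top⟩ := (IHM S₀).mp hS₀
          rw [mem_extP_iff] at hT
          refine ⟨ext_mem n α S₀ T hS₀T hT.1
            (fun h => absurd h hS₀ne) (fun h => absurd h hS₀top), ?_⟩
          rw [Function.update_self]; exact hT.2
        · obtain ⟨hS₀T, hS₀top⟩ := (IHP S₀).mp hS₀
          rw [mem_extP0_iff] at hT
          refine ⟨ext_mem n α S₀ T hS₀T hT.1
            (fun h => by rw [h] at hS₀top; simp at hS₀top) (fun _ => hT.2.1), ?_⟩
          rw [Function.update_self]; exact hT.2.2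
      · rintro ⟨hS, htop⟩
        have hS₀ : Function.update S (α+1) ∅ ∈ Tset n (α+1) := trunc_mem n α S hS
        have hSα : Function.update S (α+1) ∅ α = S α := Function.update_of_ne (by omega) _ _
        have hsub : S (α+1) ⊆ Finset.range (n (α+1)) := hS.2.1 (α+1) (by omega)
        have hne : S (α+1) ≠ ∅ := by
          intro h; rw [h] at htop; simp at htop
        have hupd : Function.update (Function.update S (α+1) ∅) (α+1) (S (α+1)) = S := by
          rw [Function.update_idem, Function.update_eq_self]
        by_cases hα : n α - 1 ∈ S α
        · refine Or.inr ⟨_, (IHP _).mpr ⟨hS₀, by rwa [hSα]⟩, S (α+1), ?_, hupd⟩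
          rw [mem_extP0_iff]
          exact ⟨hsub, hS.2.2.2.2 α (by omega) hα, htop⟩
        · have hSαne : S α ≠ ∅ := by
            intro h
            exact hne (hS.2.2.2.1 α (by omega) h)
          refine Or.inl ⟨_, (IHM _).mpr ⟨hS₀, by rwa [hSα], by rwa [hSα]⟩, S (α+1), ?_, hupd⟩
          rw [mem_extP_iff]
          exact ⟨hsub, htop⟩

section KeyCard
variable [DecidableEq (ℕ → Finset ℕ)]

lemma key_card (t : ℕ) (A : Finset (ℕ → Finset ℕ)) (ext : Finset (Finset ℕ))
    (hA : ∀ S ∈ A, S t = ∅) :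
    (A.biUnion (fun S => ext.image (Function.update S t))).card = A.card * ext.card := by
  rw [Finset.card_biUnion]
  · rw [Finset.sum_congr rfl (fun S _ => Finset.card_image_of_injective ext
      (Function.update_injective S t))]
    simp [mul_comm]
  · intro x hx y hy hxy
    rw [Function.onFun, Finset.disjoint_left]
    intro a hax hay
    obtain ⟨T, _, hT⟩ := Finset.mem_image.mp hax
    obtain ⟨T', _, hT'⟩ := Finset.mem_image.mp hay
    exact hxy (upd_eq_upd (hT.trans hT'.symm) (hA x hx) (hA y hy)).1

lemma key_disj (t : ℕ) (A B : Finset (ℕ → Finset ℕ)) (e1 e2 : Finset (Finset ℕ))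
    (hA : ∀ S ∈ A, S t = ∅) (hB : ∀ S ∈ B, S t = ∅) (hAB : ∀ S, S ∈ A → S ∉ B) :
    Disjoint (A.biUnion (fun S => e1.image (Function.update S t)))
      (B.biUnion (fun S => e2.image (Function.update S t))) := by
  rw [Finset.disjoint_left]
  intro a ha hb
  obtain ⟨x, hx, T, _, hT⟩ := by
    simpa only [Finset.mem_biUnion, Finset.mem_image] using ha
  obtain ⟨y, hy, T', _, hT'⟩ := by
    simpa only [Finset.mem_biUnion, Finset.mem_image] using hb
  have := (upd_eq_upd (hT.trans hT'.symm) (hA x hx) (hB y hy)).1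
  exact hAB x hx (this ▸ hy)

end KeyCard

lemma EMP_card_step (n : ℕ → ℕ) (α : ℕ) (hn : ∀ i, i ≤ α + 1 → 2 ≤ n i) :
    (EMP n (α+1)).1.card = (EMP n α).1.card + (EMP n α).2.1.card ∧
    (EMP n (α+1)).2.1.card
      = (EMP n α).2.1.card * (2 ^ (n (α+1) - 1) - 1)
        + (EMP n α).2.2.card * 2 ^ (n (α+1) - 2) ∧
    (EMP n (α+1)).2.2.card
      = (EMP n α).2.1.card * 2 ^ (n (α+1) - 1)
        + (EMP n α).2.2.card * 2 ^ (n (α+1) - 2) := by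
  classical
  obtain ⟨hE, hM, hP⟩ := EMP_spec n α (fun i hi => hn i (by omega))
  have hnt : 2 ≤ n (α + 1) := hn _ le_rfl
  have hvanM : ∀ S ∈ (EMP n α).2.1, S (α+1) = ∅ :=
    fun S hS => ((hM S).mp hS).1.1 (α+1) le_rfl
  have hvanP : ∀ S ∈ (EMP n α).2.2, S (α+1) = ∅ :=
    fun S hS => ((hP S).mp hS).1.1 (α+1) le_rfl
  have hdisjMP : ∀ S, S ∈ (EMP n α).2.1 → S ∉ (EMP n α).2.2 := by
    intro S h1 h2
    exact ((hM S).mp h1).2.2 ((hP S).mp h2).2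
  refine ⟨?_, ?_, ?_⟩
  · simp only [EMP]
    rw [Finset.card_union_of_disjoint]
    rw [Finset.disjoint_left]
    intro S h1 h2
    exact ((hM S).mp h2).2.1 ((hE S).mp h1).2
  · simp only [EMP]
    rw [Finset.card_union_of_disjoint (key_disj _ _ _ _ _ hvanM hvanP hdisjMP),
      key_card _ _ _ hvanM, key_card _ _ _ hvanP, card_extM n _ hnt, card_extM0 n _ hnt]
  · simp only [EMP]
    rw [Finset.card_union_of_disjoint (key_disj _ _ _ _ _ hvanM hvanP hdisjMP),
      key_card _ _ _ hvanM, key_card _ _ _ hvanP, card_extP n _ hnt, card_extP0 n _ hnt]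

lemma EMP_card_zero (n : ℕ → ℕ) (hn0 : 2 ≤ n 0) :
    (EMP n 0).1.card = 0 ∧ (EMP n 0).2.1.card = n 0 - 1 ∧ (EMP n 0).2.2.card = 1 := by
  classical
  refine ⟨by simp [EMP], ?_, by simp [EMP]⟩
  simp only [EMP]
  rw [Finset.card_image_of_injective _ ?_, Finset.card_range]
  intro i j hij
  have := congrFun hij 0
  simpa [sing] using this

noncomputable def ev (n : ℕ → ℕ) : MvPolynomial Bool (MvPolynomial ℕ ℚ) → ℚ :=
  eval₂ (MvPolynomial.eval fun j => (2 : ℚ) ^ (n j - 1))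
    (fun b => if b then (n 0 : ℚ) - 1 else 1 / 2)

lemma ev_smP_zero (n : ℕ → ℕ) : ev n (smP 0) = (n 0 : ℚ) - 1 := by
  simp [ev, smP, sPair]

lemma ev_spP_zero (n : ℕ → ℕ) : ev n (spP 0) = 1 := by
  simp [ev, spP, sPair, eval₂_mul, eval₂_X]

lemma ev_smP_succ (n : ℕ → ℕ) (j : ℕ) :
    ev n (smP (j + 1)) = ((2:ℚ) ^ (n (j+1) - 1) - 1) * ev n (smP j)
      + (1/2 * (2:ℚ) ^ (n (j+1) - 1)) * ev n (spP j) := by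
  simp [ev, smP, spP, sPair, eval₂_add, eval₂_mul, eval₂_sub, eval₂_C, eval₂_one]

lemma ev_spP_succ (n : ℕ → ℕ) (j : ℕ) :
    ev n (spP (j + 1)) = ((2:ℚ) ^ (n (j+1) - 1)) * ev n (smP j)
      + (1/2 * (2:ℚ) ^ (n (j+1) - 1)) * ev n (spP j) := by
  simp [ev, smP, spP, sPair, eval₂_add, eval₂_mul, eval₂_C]

lemma main_claim (n : ℕ → ℕ) (β : ℕ) (hn : ∀ i, i ≤ β → 2 ≤ n i) :
    ((EMP n β).2.1.card : ℚ) = ev n (smP β) ∧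
    ((EMP n β).2.2.card : ℚ) = ev n (spP β) ∧
    ((EMP n β).1.card : ℚ) = ∑ j ∈ Finset.range β, ev n (smP j) := by
  induction β with
  | zero =>
    obtain ⟨h1, h2, h3⟩ := EMP_card_zero n (hn 0 le_rfl)
    have hn0 : 2 ≤ n 0 := hn 0 le_rfl
    rw [h1, h2, h3, ev_smP_zero, ev_spP_zero]
    refine ⟨?_, by simp, by simp⟩
    rw [Nat.cast_sub (by omega)]
    simp
  | succ β IH =>
    obtain ⟨IH1, IH2, IH3⟩ := IH (fun i hi => hn i (by omega))
    obtain ⟨h1, h2, h3⟩ := EMP_card_step n β hn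
    have hnt : 2 ≤ n (β + 1) := hn _ le_rfl
    have hpow : (2:ℚ) ^ (n (β+1) - 1) = 2 ^ (n (β+1) - 2) * 2 := by
      rw [← pow_succ]
      congr 1
      omega
    have hc1 : ((2 ^ (n (β+1) - 1) - 1 : ℕ) : ℚ) = (2:ℚ) ^ (n (β+1) - 1) - 1 := by
      rw [Nat.cast_sub (Nat.one_le_two_pow)]
      push_cast
      ring
    refine ⟨?_, ?_, ?_⟩
    · rw [h2, ev_smP_succ]
      push_cast [hc1]
      rw [IH1, IH2]
      rw [hpow]
      ring
    · rw [h3, ev_spP_succ]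
      push_cast
      rw [IH1, IH2, hpow]
      ring
    · rw [h1, Finset.sum_range_succ, ← IH1, ← IH3]
      push_cast
      ring


/-- `#T_α` equals the value of `s_{α−1} = s^+_{α−1} + Σ_{j=0}^{α−1} s^-_j` under the
substitution `x_j ↦ 2^{n_{j+1}−1}` (here `n_{j+1}` of the paper is `n j`), `y ↦ 1/2`,
`z ↦ n_1 − 1` (here `n_1` of the paper is `n 0`). -/
theorem Tset_card_eq_sPoly (α : ℕ) (hα : 1 ≤ α) (n : ℕ → ℕ)
    (hn : ∀ i, i < α → 2 ≤ n i) :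
    ((Tset n α).ncard : ℚ) =
      eval₂ (MvPolynomial.eval fun j => (2 : ℚ) ^ (n j - 1))
        (fun b => if b then (n 0 : ℚ) - 1 else 1 / 2)
        (spP (α - 1) + ∑ j ∈ Finset.range α, smP j) := by
  classical
  obtain ⟨β, rfl⟩ : ∃ β, α = β + 1 := ⟨α - 1, by omega⟩
  have hn' : ∀ i, i ≤ β → 2 ≤ n i := fun i hi => hn i (by omega)
  obtain ⟨hE, hM, hP⟩ := EMP_spec n β hn'
  have hset : Tset n (β + 1) = ↑((EMP n β).1 ∪ (EMP n β).2.1 ∪ (EMP n β).2.2) := by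
    ext S
    simp only [Finset.coe_union, Set.mem_union, Finset.mem_coe, hE S, hM S, hP S]
    constructor
    · intro hS
      by_cases h0 : S β = ∅
      · exact Or.inl (Or.inl ⟨hS, h0⟩)
      · by_cases h1 : n β - 1 ∈ S β
        · exact Or.inr ⟨hS, h1⟩
        · exact Or.inl (Or.inr ⟨hS, h0, h1⟩)
    · rintro ((⟨hS, _⟩ | ⟨hS, _, _⟩) | ⟨hS, _⟩) <;> exact hS
  have hdisj1 : Disjoint (EMP n β).1 (EMP n β).2.1 := by
    rw [Finset.disjoint_left]
    intro S h1 h2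
    exact ((hM S).mp h2).2.1 ((hE S).mp h1).2
  have hdisj2 : Disjoint ((EMP n β).1 ∪ (EMP n β).2.1) (EMP n β).2.2 := by
    rw [Finset.disjoint_left]
    intro S h1 h2
    have htop := ((hP S).mp h2).2
    rcases Finset.mem_union.mp h1 with h | h
    · rw [((hE S).mp h).2] at htop
      simp at htop
    · exact ((hM S).mp h).2.2 htop
  rw [hset, Set.ncard_coe_finset, Finset.card_union_of_disjoint hdisj2,
    Finset.card_union_of_disjoint hdisj1]
  obtain ⟨c1, c2, c3⟩ := main_claim n β hn'
  have hev : eval₂ (MvPolynomial.eval fun j => (2 : ℚ) ^ (n j - 1))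
      (fun b => if b then (n 0 : ℚ) - 1 else 1 / 2)
      (spP (β + 1 - 1) + ∑ j ∈ Finset.range (β + 1), smP j)
      = ev n (spP β) + ∑ j ∈ Finset.range (β + 1), ev n (smP j) := by
    rw [eval₂_add, eval₂_sum]
    rfl
  rw [hev, Finset.sum_range_succ]
  push_cast
  rw [c1, c2, c3]
  ring
end
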